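/- arXiv:1401.6090 — 8 statements merged into one kernel-verified Lean document; each statement's English description precedes it below -/
import Mathlib

section
/- Let A, B ∈ Mₙ(ℂ) be positive definite Hermitian matrices and suppose B is an exact interpolation matrix for A, i.e., for every T ∈ Mₙ(ℂ), TᴴT ≤ I and TᴴAT ≤ A imply TᴴBT ≤ B (Loewner order). Then B commutes with every orthogonal projection that commutes with A, and there exists a function h : (0,∞) → (0,∞) such that B = h(A), where h(A) is obtained by applying h to each eigenvalue of A in a spectral decomposition. -/
open Matrix MeasureTheory
open scoped ComplexOrder

/-- Loewner order on complex `n × n` matrices: `LoewnerLE A B` iff `B - A` is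
positive semidefinite (i.e. `A ≤ B`). -/
def LoewnerLE {n : ℕ} (A B : Matrix (Fin n) (Fin n) ℂ) : Prop := (B - A).PosSemidef

/-- Functional calculus for Hermitian matrices: apply `h : ℝ → ℝ` to each eigenvalue
in a spectral decomposition of `A` (junk value `0` for non-Hermitian input). -/
noncomputable def matFunCalc {n : ℕ} (h : ℝ → ℝ) (A : Matrix (Fin n) (Fin n) ℂ) :
    Matrix (Fin n) (Fin n) ℂ :=
  if hA : A.IsHermitian then
    (hA.eigenvectorUnitary : Matrix (Fin n) (Fin n) ℂ) *
      diagonal (fun i => (h (hA.eigenvalues i) : ℂ)) *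
      star (hA.eigenvectorUnitary : Matrix (Fin n) (Fin n) ℂ)
  else 0

/-- A matrix that is both PSD and negative-semidefinite is zero. -/
lemma psd_antisymm {n : ℕ} {M : Matrix (Fin n) (Fin n) ℂ}
    (h1 : M.PosSemidef) (h2 : (-M).PosSemidef) : M = 0 := by
  have hv : ∀ x : Fin n → ℂ, M *ᵥ x = 0 := by
    intro x
    rw [← h1.dotProduct_mulVec_zero_iff]
    have a1 := h1.dotProduct_mulVec_nonneg x
    have a2 := h2.dotProduct_mulVec_nonneg x
    rw [neg_mulVec, dotProduct_neg] at a2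
    exact le_antisymm (neg_nonneg.mp a2) a1
  ext i j
  have := congrFun (hv (Pi.single j 1)) i
  simpa using this

/-- Donoghue's lemma, matrix case: if `B` is an exact interpolation
matrix for `A`, then `B` commutes with every orthogonal projection commuting with
`A`, and `B = h(A)` for some positive function `h`. -/
theorem donoghue_lemma (n : ℕ) (A B : Matrix (Fin n) (Fin n) ℂ)
    (hA : A.PosDef) (hB : B.PosDef)
    (hexact : ∀ T : Matrix (Fin n) (Fin n) ℂ,
      LoewnerLE (Tᴴ * T) 1 → LoewnerLE (Tᴴ * A * T) A → LoewnerLE (Tᴴ * B * T) B) :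
    (∀ P : Matrix (Fin n) (Fin n) ℂ,
        P * P = P → Pᴴ = P → A * P = P * A → B * P = P * B) ∧
    ∃ h : ℝ → ℝ, (∀ x : ℝ, 0 < x → 0 < h x) ∧ B = matFunCalc h A := by
  classical
  have part1 : ∀ P : Matrix (Fin n) (Fin n) ℂ,
      P * P = P → Pᴴ = P → A * P = P * A → B * P = P * B := by
    intro P hP2 hPH hAP
    set T : Matrix (Fin n) (Fin n) ℂ := P + P - 1 with hT
    have hTH : Tᴴ = T := by
      simp [hT, conjTranspose_sub, conjTranspose_add, hPH]
    have hTT : T * T = 1 := by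
      simp only [hT, sub_mul, mul_sub, add_mul, mul_add, one_mul, mul_one, hP2]
      abel
    have hTA : T * A = A * T := by
      simp only [hT, sub_mul, mul_sub, add_mul, mul_add, one_mul, mul_one, hAP]
    have h1 : LoewnerLE (Tᴴ * T) 1 := by
      rw [LoewnerLE, hTH, hTT, sub_self]
      exact Matrix.PosSemidef.zero
    have h2 : LoewnerLE (Tᴴ * A * T) A := by
      rw [LoewnerLE, hTH, hTA, mul_assoc, hTT, mul_one, sub_self]
      exact Matrix.PosSemidef.zero
    have h3 := hexact T h1 h2
    rw [LoewnerLE, hTH] at h3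
    have key : T * (B - T * B * T) * T = T * B * T - (T * T) * B * (T * T) := by
      noncomm_ring
    have h4 : (T * B * T - B).PosSemidef := by
      have h5 := h3.conjTranspose_mul_mul_same T
      rw [hTH, key, hTT, one_mul, mul_one] at h5
      exact h5
    have h6 : T * B * T - B = 0 := psd_antisymm h4 (by rwa [neg_sub])
    have h7 : T * B * T = B := sub_eq_zero.mp h6
    have h8 : B * T = T * B := by
      calc B * T = (T * T) * B * T := by rw [hTT, one_mul]
        _ = T * (T * B * T) := by noncomm_ring
        _ = T * B := by rw [h7]
    have h9 : B * P + B * P = P * B + P * B := by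
      have h10 : B * (P + P - 1) = (P + P - 1) * B := h8
      simp only [mul_sub, sub_mul, mul_add, add_mul, mul_one, one_mul] at h10
      exact sub_left_inj.mp h10
    have h11 : (2 : ℂ) • (B * P) = (2 : ℂ) • (P * B) := by
      rw [two_smul, two_smul]; exact h9
    exact smul_right_injective _ (two_ne_zero) h11
  refine ⟨part1, ?_⟩
  have hAH : A.IsHermitian := hA.1
  set U : Matrix (Fin n) (Fin n) ℂ := (hAH.eigenvectorUnitary : Matrix (Fin n) (Fin n) ℂ) with hU
  have hUU : star U * U = 1 := Matrix.mem_unitaryGroup_iff'.mp hAH.eigenvectorUnitary.2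
  have hUU' : U * star U = 1 := Matrix.mem_unitaryGroup_iff.mp hAH.eigenvectorUnitary.2
  set d : Fin n → ℝ := hAH.eigenvalues with hd
  set D : Matrix (Fin n) (Fin n) ℂ := diagonal (fun i => (d i : ℂ)) with hD
  have hspec : A = U * D * star U := by
    have := hAH.spectral_theorem
    rw [Unitary.conjStarAlgAut_apply] at this
    exact this
  set C : Matrix (Fin n) (Fin n) ℂ := star U * B * U with hC
  have hCU : U * C * star U = B := by
    have e : U * (star U * B * U) * star U = (U * star U) * B * (U * star U) := by
      noncomm_ring
    rw [hC, e, hUU', one_mul, mul_one]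
  -- C is positive definite
  have hCH : C.IsHermitian := by
    rw [hC, Matrix.IsHermitian]
    simp [Matrix.conjTranspose_mul, Matrix.star_eq_conjTranspose, hB.1.eq, mul_assoc]
  have hCP : C.PosDef := by
    refine Matrix.PosDef.of_dotProduct_mulVec_pos hCH (fun x hx => ?_)
    have hxU : U *ᵥ x ≠ 0 := by
      intro h0
      apply hx
      have : star U *ᵥ (U *ᵥ x) = star U *ᵥ 0 := by rw [h0]
      rwa [mulVec_mulVec, hUU, one_mulVec, mulVec_zero] at this
    have e : star x ⬝ᵥ (C *ᵥ x) = star (U *ᵥ x) ⬝ᵥ (B *ᵥ (U *ᵥ x)) := by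
      rw [hC, ← mulVec_mulVec, ← mulVec_mulVec, dotProduct_mulVec (star x),
        star_mulVec, Matrix.star_eq_conjTranspose]
    rw [e]
    exact hB.dotProduct_mulVec_pos hxU
  -- C commutes with every hermitian idempotent commuting with D
  have hCcomm : ∀ Q : Matrix (Fin n) (Fin n) ℂ,
      Q * Q = Q → Qᴴ = Q → D * Q = Q * D → C * Q = Q * C := by
    intro Q hQ2 hQH hDQ
    have hPP : (U * Q * star U) * (U * Q * star U) = U * Q * star U := by
      have e : (U * Q * star U) * (U * Q * star U)
          = U * (Q * ((star U * U) * Q)) * star U := by noncomm_ring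
      rw [e, hUU, one_mul, hQ2]
    have hPH : (U * Q * star U)ᴴ = U * Q * star U := by
      simp [Matrix.conjTranspose_mul, Matrix.star_eq_conjTranspose, hQH, mul_assoc]
    have hAP : A * (U * Q * star U) = (U * Q * star U) * A := by
      have e1 : (U * D * star U) * (U * Q * star U)
          = U * (D * ((star U * U) * Q)) * star U := by noncomm_ring
      have e2 : (U * Q * star U) * (U * D * star U)
          = U * (Q * ((star U * U) * D)) * star U := by noncomm_ring
      rw [hspec, e1, e2, hUU, one_mul, one_mul, hDQ]
    have hBP := part1 (U * Q * star U) hPP hPH hAP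
    have e3 : star U * (B * (U * Q * star U)) * U
        = (star U * B * U) * Q * (star U * U) := by noncomm_ring
    have e4 : star U * ((U * Q * star U) * B) * U
        = (star U * U) * Q * (star U * B * U) := by noncomm_ring
    have := congrArg (fun M => star U * M * U) hBP
    rw [e3, e4, hUU, mul_one, one_mul] at this
    rw [hC]
    exact this
  -- C is diagonal
  have hCdiag : ∀ i j : Fin n, i ≠ j → C i j = 0 := by
    intro i j hij
    have hQ2 : (diagonal (fun k => if k = j then (1:ℂ) else 0)) *
        (diagonal (fun k => if k = j then (1:ℂ) else 0)) =
        diagonal (fun k => if k = j then (1:ℂ) else 0) := by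
      rw [diagonal_mul_diagonal]
      have : (fun k => (if k = j then (1:ℂ) else 0) * (if k = j then 1 else 0))
          = fun k => if k = j then (1:ℂ) else 0 := by
        funext k
        by_cases h : k = j <;> simp [h]
      rw [this]
    have hQH : (diagonal (fun k => if k = j then (1:ℂ) else 0))ᴴ =
        diagonal (fun k => if k = j then (1:ℂ) else 0) := by
      rw [diagonal_conjTranspose]
      have : (star fun k => if k = j then (1:ℂ) else 0)
          = fun k => if k = j then (1:ℂ) else 0 := by
        funext k
        by_cases h : k = j <;> simp [Pi.star_apply, h]
      rw [this]
    have hDQ : D * (diagonal (fun k => if k = j then (1:ℂ) else 0)) =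
        (diagonal (fun k => if k = j then (1:ℂ) else 0)) * D := by
      rw [hD, diagonal_mul_diagonal, diagonal_mul_diagonal]
      have : (fun k => ((d k : ℂ)) * (if k = j then 1 else 0))
          = fun k => (if k = j then (1:ℂ) else 0) * (d k : ℂ) := by
        funext k
        ring
      rw [this]
    have hcomm := hCcomm _ hQ2 hQH hDQ
    have := congrFun (congrFun hcomm i) j
    rw [mul_diagonal, diagonal_mul] at this
    simpa [hij] using this
  set c : Fin n → ℂ := fun i => C i i with hc
  have hCd : C = diagonal c := by
    ext k l
    by_cases h : k = l
    · subst h; simp [diagonal, hc]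
    · rw [diagonal_apply_ne _ h]
      exact hCdiag k l h
  -- diagonal entries are positive
  have hcpos : ∀ i, 0 < c i := by
    intro i
    have hx : (Pi.single i 1 : Fin n → ℂ) ≠ 0 := by
      intro h0
      have := congrFun h0 i
      simp at this
    have h := hCP.dotProduct_mulVec_pos hx
    have hstar : star (Pi.single i 1 : Fin n → ℂ) = Pi.single i 1 := by
      funext k
      by_cases hk : k = i
      · subst hk; simp
      · simp [Pi.single_eq_of_ne hk]
    rw [hstar, mulVec_single] at h
    simpa [single_dotProduct, hc] using h
  -- equal eigenvalues give equal diagonal entries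
  have heq : ∀ i j : Fin n, d i = d j → c i = c j := by
    intro i j hdij
    by_cases hij : i = j
    · rw [hij]
    · set u : Fin n → ℂ := fun k => if k = i ∨ k = j then 1 else 0 with hu
      set Q : Matrix (Fin n) (Fin n) ℂ := Matrix.of fun k l => (1/2 : ℂ) * u k * u l with hQ
      have husq : ∀ m, u m * u m = (if m = i then (1:ℂ) else 0) + (if m = j then 1 else 0) := by
        intro m
        by_cases h1 : m = i
        · subst h1; simp [hu, hij]
        · by_cases h2 : m = j
          · subst h2; simp [hu, h1]
          · simp [hu, h1, h2]
      have hsum : ∑ m : Fin n, u m * u m = 2 := by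
        simp only [husq, Finset.sum_add_distrib, Finset.sum_ite_eq', Finset.mem_univ, if_true]
        norm_num
      have hQ2 : Q * Q = Q := by
        ext k l
        rw [Matrix.mul_apply]
        simp only [hQ, Matrix.of_apply]
        calc ∑ m : Fin n, (1/2 * u k * u m) * (1/2 * u m * u l)
            = ∑ m : Fin n, (1/4 * u k * u l) * (u m * u m) := by
              refine Finset.sum_congr rfl fun m _ => by ring
          _ = (1/4 * u k * u l) * ∑ m : Fin n, (u m * u m) := by
              rw [Finset.mul_sum]
          _ = 1/2 * u k * u l := by rw [hsum]; ring
      have hQH : Qᴴ = Q := by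
        ext k l
        simp only [conjTranspose_apply, hQ, Matrix.of_apply]
        by_cases hk : k = i ∨ k = j <;> by_cases hl : l = i ∨ l = j <;>
          simp [hu, hk, hl]
      have hDQ : D * Q = Q * D := by
        ext k l
        rw [hD, diagonal_mul, mul_diagonal]
        by_cases hk : k = i ∨ k = j
        · by_cases hl : l = i ∨ l = j
          · have hdk : d k = d i := by rcases hk with h | h <;> rw [h]; exact hdij.symm
            have hdl : d l = d i := by rcases hl with h | h <;> rw [h]; exact hdij.symm
            rw [hdk, hdl]; ring
          · simp [hQ, hu, hl]
        · simp [hQ, hu, hk]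
      have hcomm := hCcomm Q hQ2 hQH hDQ
      have := congrFun (congrFun hcomm i) j
      rw [hCd, diagonal_mul, mul_diagonal] at this
      have hQij : Q i j = 1/2 := by simp [hQ, hu]
      rw [hQij] at this
      -- this : c i * (1/2) = (1/2) * c j
      rw [mul_comm] at this
      exact mul_left_cancel₀ (by norm_num : (1/2 : ℂ) ≠ 0) this
  -- the function h
  refine ⟨fun x => if hx : ∃ i, d i = x then (c hx.choose).re else x, ?_, ?_⟩
  · intro x hx
    beta_reduce
    by_cases hex : ∃ i, d i = x
    · rw [dif_pos hex]
      have h0 := hcpos hex.choose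
      rw [Complex.lt_def] at h0
      simpa using h0.1
    · rwa [dif_neg hex]
  · have hcreal : ∀ i, ((c i).re : ℂ) = c i := by
      intro i
      have h0 := hcpos i
      rw [Complex.lt_def] at h0
      apply Complex.ext
      · simp
      · simp [← h0.2]
    rw [matFunCalc, dif_pos hAH, ← hU, ← hd]
    have hfun : (fun i : Fin n =>
        ((if hx : ∃ k, d k = d i then (c hx.choose).re else d i : ℝ) : ℂ)) = c := by
      funext i
      have hex : ∃ k, d k = d i := ⟨i, rfl⟩
      rw [dif_pos hex, congrArg Complex.re (heq hex.choose i hex.choose_spec)]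
      exact hcreal i
    rw [hfun, ← hCd, hCU]
end

section
/- Let 𝐇 : (0,∞) → (0,∞) be increasing and continuous with 𝐇(1) = 1 and 𝐇(t) ≤ max{1, t} for all t. Let A, B ∈ Mₙ(ℂ) be positive definite Hermitian matrices such that for all M₀, M₁ > 0 and all T ∈ Mₙ(ℂ), the conditions TᴴT ≤ M₀·I and TᴴAT ≤ M₁·A imply TᴴBT ≤ M₀·𝐇(M₁/M₀)·B. Then there exists a function h : (0,∞) → (0,∞) such that B = h(A) and h(λ) ≤ 𝐇(λ/μ)·h(μ) for all eigenvalues λ, μ of A. -/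
open Matrix MeasureTheory
open scoped ComplexOrder

private lemma loewner_conj {n : ℕ} {X Y : Matrix (Fin n) (Fin n) ℂ}
    (W : Matrix (Fin n) (Fin n) ℂ) (h : LoewnerLE X Y) :
    LoewnerLE (Wᴴ * X * W) (Wᴴ * Y * W) := by
  have h2 := h.conjTranspose_mul_mul_same W
  unfold LoewnerLE at *
  convert h2 using 1
  simp [Matrix.mul_sub, Matrix.sub_mul]

private lemma loewner_refl {n : ℕ} (X : Matrix (Fin n) (Fin n) ℂ) : LoewnerLE X X := by
  unfold LoewnerLE
  simp only [sub_self]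
  exact Matrix.PosSemidef.zero

private lemma loewner_antisymm {n : ℕ} {X Y : Matrix (Fin n) (Fin n) ℂ}
    (h1 : LoewnerLE X Y) (h2 : LoewnerLE Y X) : X = Y := by
  unfold LoewnerLE at *
  have hZH : (Y - X).IsHermitian := h1.1
  have hev : ∀ i, hZH.eigenvalues i = 0 := by
    intro i
    refine le_antisymm ?_ (h1.eigenvalues_nonneg i)
    have h0 := h2.re_dotProduct_nonneg (hZH.eigenvectorBasis i)
    have heq := hZH.eigenvalues_eq i
    have hXY : X - Y = -(Y - X) := (neg_sub Y X).symm
    rw [hXY, neg_mulVec, dotProduct_neg, map_neg] at h0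
    linarith [heq ▸ h0]
  have hz : Y - X = 0 := by
    rw [hZH.spectral_theorem]
    have hd : diagonal (RCLike.ofReal ∘ hZH.eigenvalues) = (0 : Matrix (Fin n) (Fin n) ℂ) := by
      ext i j
      simp [diagonal, hev, Matrix.zero_apply]
    rw [hd]
    simp
  exact (sub_eq_zero.mp hz).symm

private lemma psd_diag_re_nonneg {n : ℕ} {Y : Matrix (Fin n) (Fin n) ℂ}
    (h : Y.PosSemidef) (j : Fin n) : 0 ≤ (Y j j).re := by
  have h0 := h.re_dotProduct_nonneg (Pi.single j 1)
  have he : star (Pi.single j (1:ℂ)) ⬝ᵥ Y *ᵥ Pi.single j 1 = Y j j := by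
    have hs : star (Pi.single j 1 : Fin n → ℂ) = Pi.single j 1 := by
      funext k
      by_cases hk : k = j <;> simp [Pi.star_apply, Pi.single_apply, hk]
    rw [hs, single_dotProduct, Matrix.mulVec_single]
    simp
  rw [he] at h0
  exact h0

/-- Theorem 3.1, matrix case: if the quadratic space determined by
`B` is of type `𝐇` relative to the couple determined by `A`, then `B = h(A)` for
a positive function `h` satisfying `h(λ) ≤ 𝐇(λ/μ)·h(μ)` on the spectrum of `A`. -/
theorem type_H_representation (n : ℕ) (H : ℝ → ℝ)
    (Hmono : ∀ s t : ℝ, 0 < s → s ≤ t → H s ≤ H t)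
    (Hcont : ContinuousOn H (Set.Ioi (0 : ℝ)))
    (Hpos : ∀ t : ℝ, 0 < t → 0 < H t)
    (Hone : H 1 = 1) (Hbound : ∀ t : ℝ, 0 < t → H t ≤ max 1 t)
    (A B : Matrix (Fin n) (Fin n) ℂ) (hA : A.PosDef) (hB : B.PosDef)
    (htype : ∀ M₀ M₁ : ℝ, 0 < M₀ → 0 < M₁ → ∀ T : Matrix (Fin n) (Fin n) ℂ,
      LoewnerLE (Tᴴ * T) (M₀ • (1 : Matrix (Fin n) (Fin n) ℂ)) →
      LoewnerLE (Tᴴ * A * T) (M₁ • A) →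
      LoewnerLE (Tᴴ * B * T) ((M₀ * H (M₁ / M₀)) • B)) :
    ∃ h : ℝ → ℝ, (∀ x : ℝ, 0 < x → 0 < h x) ∧ B = matFunCalc h A ∧
      ∀ i j : Fin n, h (hA.isHermitian.eigenvalues i) ≤
        H (hA.isHermitian.eigenvalues i / hA.isHermitian.eigenvalues j) *
          h (hA.isHermitian.eigenvalues j) := by
  classical
  have hAH := hA.isHermitian
  set lam : Fin n → ℝ := hAH.eigenvalues with hlam
  have hlampos : ∀ i, 0 < lam i := fun i => hA.eigenvalues_pos i
  set U : Matrix (Fin n) (Fin n) ℂ := ↑hAH.eigenvectorUnitary with hUdef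
  set D : Matrix (Fin n) (Fin n) ℂ := diagonal (fun k => ((lam k : ℝ) : ℂ)) with hDdef
  have hU1 : Uᴴ * U = 1 := by
    simpa [Matrix.star_eq_conjTranspose] using
      Matrix.mem_unitaryGroup_iff'.mp hAH.eigenvectorUnitary.2
  have hU2 : U * Uᴴ = 1 := by
    simpa [Matrix.star_eq_conjTranspose] using
      Matrix.mem_unitaryGroup_iff.mp hAH.eigenvectorUnitary.2
  have hU1' : ∀ X : Matrix (Fin n) (Fin n) ℂ, Uᴴ * (U * X) = X := by
    intro X; rw [← Matrix.mul_assoc, hU1, Matrix.one_mul]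
  have hU2' : ∀ X : Matrix (Fin n) (Fin n) ℂ, U * (Uᴴ * X) = X := by
    intro X; rw [← Matrix.mul_assoc, hU2, Matrix.one_mul]
  have hAspec : A = U * D * Uᴴ := by
    rw [hUdef, hDdef, hlam]
    simpa [Matrix.star_eq_conjTranspose, Function.comp_def] using hAH.spectral_theorem
  set C : Matrix (Fin n) (Fin n) ℂ := Uᴴ * B * U with hCdef
  have hBC : B = U * C * Uᴴ := by
    rw [hCdef]
    calc B = (U * Uᴴ) * B * (U * Uᴴ) := by rw [hU2]; simp
    _ = U * (Uᴴ * B * U) * Uᴴ := by simp only [Matrix.mul_assoc]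
  -- transformed hypothesis
  have htype' : ∀ M₀ M₁ : ℝ, 0 < M₀ → 0 < M₁ → ∀ S : Matrix (Fin n) (Fin n) ℂ,
      LoewnerLE (Sᴴ * S) (M₀ • (1 : Matrix (Fin n) (Fin n) ℂ)) →
      LoewnerLE (Sᴴ * D * S) (M₁ • D) →
      LoewnerLE (Sᴴ * C * S) ((M₀ * H (M₁ / M₀)) • C) := by
    intro M₀ M₁ h₀ h₁ S hS1 hS2
    set T : Matrix (Fin n) (Fin n) ℂ := U * S * Uᴴ with hT
    have hTc : Tᴴ = U * Sᴴ * Uᴴ := by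
      rw [hT]
      simp [Matrix.conjTranspose_mul, Matrix.mul_assoc]
    have c1 : LoewnerLE (Tᴴ * T) (M₀ • (1 : Matrix (Fin n) (Fin n) ℂ)) := by
      have := loewner_conj Uᴴ hS1
      have e1 : (Uᴴ)ᴴ * (Sᴴ * S) * Uᴴ = Tᴴ * T := by
        rw [hTc, hT]
        simp [Matrix.mul_assoc, hU1', hU2']
      have e2 : (Uᴴ)ᴴ * (M₀ • (1 : Matrix (Fin n) (Fin n) ℂ)) * Uᴴ
          = M₀ • (1 : Matrix (Fin n) (Fin n) ℂ) := by
        simp [Matrix.mul_smul, Matrix.smul_mul, hU2]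
      rwa [e1, e2] at this
    have c2 : LoewnerLE (Tᴴ * A * T) (M₁ • A) := by
      have := loewner_conj Uᴴ hS2
      have e1 : (Uᴴ)ᴴ * (Sᴴ * D * S) * Uᴴ = Tᴴ * A * T := by
        rw [hTc, hT, hAspec]
        simp [Matrix.mul_assoc, hU1', hU2']
      have e2 : (Uᴴ)ᴴ * (M₁ • D) * Uᴴ = M₁ • A := by
        rw [hAspec]
        simp [Matrix.mul_smul, Matrix.smul_mul, Matrix.mul_assoc]
      rwa [e1, e2] at this
    have c3 := htype M₀ M₁ h₀ h₁ T c1 c2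
    have := loewner_conj U c3
    have e1 : Uᴴ * (Tᴴ * B * T) * U = Sᴴ * C * S := by
      rw [hTc, hT, hCdef]
      simp [Matrix.mul_assoc, hU1', hU2', hU1, hU2]
    have e2 : Uᴴ * ((M₀ * H (M₁ / M₀)) • B) * U = (M₀ * H (M₁ / M₀)) • C := by
      rw [hCdef]
      simp [Matrix.mul_smul, Matrix.smul_mul, Matrix.mul_assoc]
    rwa [e1, e2] at this
  -- C is diagonal
  have hCdiag : ∀ p q : Fin n, p ≠ q → C p q = 0 := by
    intro p q hpq
    set s : Fin n → ℂ := fun k => if k = p then -1 else 1 with hs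
    set S : Matrix (Fin n) (Fin n) ℂ := diagonal s with hSdef
    have hss : star s = s := by
      funext k
      by_cases hk : k = p <;> simp [hs, Pi.star_apply, hk]
    have hSc : Sᴴ = S := by
      rw [hSdef, Matrix.diagonal_conjTranspose, hss]
    have hSS : S * S = 1 := by
      rw [hSdef, Matrix.diagonal_mul_diagonal]
      have hone : (fun i => s i * s i) = fun _ => (1:ℂ) := by
        funext k; by_cases hk : k = p <;> simp [hs, hk]
      rw [hone, Matrix.diagonal_one]
    have hSD : S * D * S = D := by
      ext k l
      rw [hSdef, hDdef, Matrix.mul_diagonal, Matrix.diagonal_mul]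
      by_cases hkl : k = l
      · subst hkl
        by_cases hk : k = p <;> simp [hs, hk, Matrix.diagonal_apply_eq]
      · simp [Matrix.diagonal_apply_ne _ hkl]
    have cond1 : LoewnerLE (Sᴴ * S) ((1:ℝ) • (1 : Matrix (Fin n) (Fin n) ℂ)) := by
      rw [hSc, hSS, one_smul]; exact loewner_refl _
    have cond2 : LoewnerLE (Sᴴ * D * S) ((1:ℝ) • D) := by
      rw [hSc, hSD, one_smul]; exact loewner_refl _
    have h1 := htype' 1 1 one_pos one_pos S cond1 cond2
    have hscalar : ((1:ℝ) * H (1/1)) = 1 := by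
      norm_num [Hone]
    rw [hscalar, one_smul] at h1
    -- reverse inequality
    have h2 := loewner_conj S h1
    have e1 : Sᴴ * (Sᴴ * C * S) * S = C := by
      rw [hSc]
      calc S * (S * C * S) * S = (S * S) * C * (S * S) := by
            simp only [Matrix.mul_assoc]
      _ = C := by rw [hSS]; simp
    rw [e1] at h2
    have heq := loewner_antisymm h1 h2
    have hent : (Sᴴ * C * S) p q = - C p q := by
      rw [hSc, hSdef, Matrix.mul_diagonal, Matrix.diagonal_mul]
      simp [hs, if_neg (Ne.symm hpq)]
    rw [heq] at hent
    have h2' : (2:ℂ) * C p q = 0 := by linear_combination hent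
    have h3 := mul_eq_zero.mp h2'
    simpa using h3
  -- diagonal entries of C are positive
  have hCpos : ∀ j : Fin n, 0 < C j j := by
    intro j
    have hj : (Pi.single j 1 : Fin n → ℂ) ≠ 0 := by
      intro h0
      have h1 := congr_fun h0 j
      simp [Pi.single_apply] at h1
    have hv : U *ᵥ (Pi.single j 1 : Fin n → ℂ) ≠ 0 := by
      intro h0
      apply hj
      have h1 : Uᴴ *ᵥ (U *ᵥ (Pi.single j 1 : Fin n → ℂ)) = Uᴴ *ᵥ 0 := by rw [h0]
      rwa [Matrix.mulVec_mulVec, hU1, Matrix.one_mulVec, Matrix.mulVec_zero] at h1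
    have hpB := hB.dotProduct_mulVec_pos hv
    have htrans : star (U *ᵥ (Pi.single j 1 : Fin n → ℂ)) ⬝ᵥ
        (B *ᵥ (U *ᵥ (Pi.single j 1 : Fin n → ℂ))) = C j j := by
      have e : C *ᵥ (Pi.single j 1 : Fin n → ℂ)
          = Uᴴ *ᵥ (B *ᵥ (U *ᵥ (Pi.single j 1 : Fin n → ℂ))) := by
        rw [hCdef, Matrix.mulVec_mulVec, Matrix.mulVec_mulVec]
      have e2 : star (Pi.single j 1 : Fin n → ℂ) ⬝ᵥ
          (C *ᵥ (Pi.single j 1 : Fin n → ℂ)) = C j j := by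
        have hs : star (Pi.single j 1 : Fin n → ℂ) = Pi.single j 1 := by
          funext k
          by_cases hk : k = j <;> simp [Pi.star_apply, Pi.single_apply, hk]
        rw [hs, single_dotProduct, Matrix.mulVec_single]
        simp
      rw [← e2, e, Matrix.dotProduct_mulVec (star (Pi.single j 1 : Fin n → ℂ)) Uᴴ, ← star_mulVec]
    rw [htrans] at hpB
    exact hpB
  have hCre : ∀ j : Fin n, C j j = (((C j j).re : ℝ) : ℂ) := by
    intro j
    have h0 := hCpos j
    rw [Complex.lt_def] at h0
    exact Complex.ext rfl h0.2.symm
  have hCrepos : ∀ j : Fin n, 0 < (C j j).re := by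
    intro j
    have h0 := hCpos j
    rw [Complex.lt_def] at h0
    simpa using h0.1
  -- the key inequality
  have key : ∀ i j : Fin n, (C i i).re ≤ H (lam i / lam j) * (C j j).re := by
    intro i j
    set S : Matrix (Fin n) (Fin n) ℂ := single i j (1:ℂ) with hSdef
    have hSc : Sᴴ = single j i 1 := by
      ext k l
      rw [hSdef]
      simp only [Matrix.conjTranspose_apply, Matrix.single, Matrix.of_apply]
      by_cases h1 : i = l <;> by_cases h2 : j = k <;> simp [h1, h2]
    have hSS : Sᴴ * S = single j j (1:ℂ) := by
      rw [hSc, hSdef, Matrix.single_mul_single_same, one_mul]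
    have cond1 : LoewnerLE (Sᴴ * S) ((1:ℝ) • (1 : Matrix (Fin n) (Fin n) ℂ)) := by
      unfold LoewnerLE
      have hdd : (1:ℝ) • (1 : Matrix (Fin n) (Fin n) ℂ) - Sᴴ * S
          = diagonal (fun k => if k = j then 0 else 1) := by
        rw [hSS, one_smul]
        ext k l
        by_cases hkl : k = l
        · subst hkl
          by_cases hk : k = j
          · simp [Matrix.single, Matrix.one_apply, Matrix.diagonal_apply_eq, hk]
          · simp [Matrix.single, Matrix.one_apply, Matrix.diagonal_apply_eq, hk,
              Ne.symm hk]
        · rw [Matrix.sub_apply, Matrix.one_apply_ne hkl, Matrix.diagonal_apply_ne _ hkl,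
            Matrix.single_apply_of_ne (h := by rintro ⟨rfl, rfl⟩; exact hkl rfl)]
          simp
      rw [hdd]
      refine Matrix.posSemidef_diagonal_iff.mpr fun k => ?_
      by_cases hk : k = j <;> simp [hk]
    have hSD2 : Sᴴ * D * S = single j j ((lam i : ℂ)) := by
      have hstep : single j i (1:ℂ) * D = single j i ((lam i : ℂ)) := by
        rw [hDdef]
        ext k l
        rw [Matrix.mul_diagonal]
        simp only [Matrix.single, Matrix.of_apply, Function.comp_apply]
        by_cases h1 : j = k <;> by_cases h2 : i = l <;>
          simp [h1, h2]
      rw [hSc, hSdef, hstep, Matrix.single_mul_single_same, mul_one]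
    have hMpos : 0 < lam i / lam j := div_pos (hlampos i) (hlampos j)
    have cond2 : LoewnerLE (Sᴴ * D * S) ((lam i / lam j) • D) := by
      unfold LoewnerLE
      have hdd : (lam i / lam j) • D - Sᴴ * D * S
          = diagonal (fun k => (((lam i / lam j) * lam k
              - if k = j then lam i else 0 : ℝ) : ℂ)) := by
        rw [hSD2, hDdef]
        ext k l
        by_cases hkl : k = l
        · subst hkl
          rw [Matrix.sub_apply, Matrix.smul_apply, Matrix.diagonal_apply_eq,
            Matrix.diagonal_apply_eq]
          by_cases hk : k = j
          · subst hk
            rw [Matrix.single_apply_same]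
            simp only [if_pos rfl, Complex.real_smul]
            push_cast
            ring
          · rw [Matrix.single_apply_of_ne (h := by rintro ⟨rfl, -⟩; exact hk rfl)]
            simp only [if_neg hk, Complex.real_smul]
            push_cast
            ring
        · rw [Matrix.sub_apply, Matrix.smul_apply, Matrix.diagonal_apply_ne _ hkl,
            Matrix.diagonal_apply_ne _ hkl,
            Matrix.single_apply_of_ne (h := by rintro ⟨rfl, rfl⟩; exact hkl rfl)]
          simp
      rw [hdd]
      refine Matrix.posSemidef_diagonal_iff.mpr fun k => ?_
      rw [Complex.zero_le_real]
      by_cases hk : k = j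
      · subst hk
        rw [if_pos rfl, div_mul_cancel₀ _ (ne_of_gt (hlampos k))]
        simp
      · rw [if_neg hk, sub_zero]
        exact le_of_lt (mul_pos hMpos (hlampos k))
    have h1 := htype' 1 (lam i / lam j) one_pos hMpos S cond1 cond2
    unfold LoewnerLE at h1
    have h3 : (Sᴴ * C * S) j j = C i i := by
      rw [hSc, hSdef, Matrix.mul_single_apply_same,
        Matrix.single_mul_apply_same, one_mul, mul_one]
    have h4 := psd_diag_re_nonneg h1 j
    rw [Matrix.sub_apply, Matrix.smul_apply, h3] at h4
    have h5 : ((1 * H (lam i / lam j / 1)) • C j j - C i i).re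
        = H (lam i / lam j) * (C j j).re - (C i i).re := by
      rw [div_one, one_mul, Complex.sub_re, Complex.real_smul, Complex.re_ofReal_mul]
    rw [h5] at h4
    linarith
  -- construct h
  set hfun : ℝ → ℝ := fun x =>
    if hx : ∃ k : Fin n, lam k = x then (C hx.choose hx.choose).re else 1 with hfundef
  have hval : ∀ k : Fin n, hfun (lam k) = (C k k).re := by
    intro k
    have hex : ∃ k' : Fin n, lam k' = lam k := ⟨k, rfl⟩
    have hch : lam hex.choose = lam k := hex.choose_spec
    have h1 := key hex.choose k
    have h2 := key k hex.choose
    rw [hch] at h1 h2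
    rw [div_self (ne_of_gt (hlampos k)), Hone, one_mul] at h1 h2
    have hc : hfun (lam k) = (C hex.choose hex.choose).re := by
      simp only [hfundef]
      rw [dif_pos hex]
    rw [hc]
    exact le_antisymm h1 h2
  refine ⟨hfun, ?_, ?_, ?_⟩
  · intro x hx
    by_cases hex : ∃ k : Fin n, lam k = x
    · simp only [hfundef]
      rw [dif_pos hex]
      exact hCrepos _
    · simp only [hfundef]
      rw [dif_neg hex]
      exact one_pos
  · unfold matFunCalc
    rw [dif_pos hAH]
    have hdiag : diagonal (fun i => ((hfun (hAH.eigenvalues i) : ℝ) : ℂ)) = C := by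
      ext k l
      by_cases hkl : k = l
      · subst hkl
        rw [Matrix.diagonal_apply_eq]
        rw [show hAH.eigenvalues k = lam k from rfl, hval k, ← hCre k]
      · rw [Matrix.diagonal_apply_ne _ hkl, hCdiag k l hkl]
    rw [hdiag]
    rw [← Matrix.star_eq_conjTranspose] at hBC
    exact hBC
  · intro i j
    have h1 := key i j
    rw [hval i, hval j]
    exact h1
end

section
/- Let θ ∈ (0,1) and let A, B ∈ Mₙ(ℂ) be positive definite Hermitian matrices such that for all M₀, M₁ > 0 and all T ∈ Mₙ(ℂ), the conditions TᴴT ≤ M₀·I and TᴴAT ≤ M₁·A imply TᴴBT ≤ M₀^{1−θ}·M₁^{θ}·B. Then there exists a constant C > 0 such that B = C·A^{θ}, where A^{θ} is the θ-th power of A defined by the functional calculus. -/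
open Matrix MeasureTheory
open scoped ComplexOrder

lemma aux_psd_neg {n : ℕ} {X : Matrix (Fin n) (Fin n) ℂ}
    (h1 : X.PosSemidef) (h2 : (-X).PosSemidef) : X = 0 := by
  have hz : ∀ x : Fin n → ℂ, X *ᵥ x = 0 := by
    intro x
    have ha := h1.dotProduct_mulVec_nonneg x
    have hb := h2.dotProduct_mulVec_nonneg x
    rw [neg_mulVec, dotProduct_neg] at hb
    exact (h1.dotProduct_mulVec_zero_iff x).mp (le_antisymm (neg_nonneg.mp hb) ha)
  ext i j
  have := congrFun (hz (Pi.single j 1)) i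
  simpa [mulVec_single] using this

lemma aux_sbm_mul {n : ℕ} (i j k l : Fin n) (M : Matrix (Fin n) (Fin n) ℂ) :
    Matrix.single i j (1:ℂ) * M * Matrix.single k l 1 = Matrix.single i l (M j k) := by
  ext a b
  by_cases hai : a = i <;> by_cases hbl : b = l <;>
    simp [mul_apply, Matrix.single, hai, hbl, ite_and, Finset.sum_ite_eq, Finset.sum_ite_eq'] <;>
    split_ifs <;> simp_all

lemma aux_sbm_diag {n : ℕ} (i : Fin n) (c : ℂ) :
    Matrix.single i i c = diagonal (Pi.single i c) := by
  ext a b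
  rcases eq_or_ne a b with rfl | h
  · simp [Matrix.single, Pi.single_apply, eq_comm]
  · rw [diagonal_apply_ne _ h]
    simp only [Matrix.single, of_apply]
    rw [if_neg]
    rintro ⟨rfl, rfl⟩; exact h rfl

lemma aux_sbm_conjT {n : ℕ} (i j : Fin n) :
    (Matrix.single i j (1:ℂ))ᴴ = Matrix.single j i 1 := by
  ext a b
  simp [conjTranspose_apply, Matrix.single, and_comm]

lemma aux_entry_eval {n : ℕ} (M : Matrix (Fin n) (Fin n) ℂ) (k : Fin n) :
    star (Pi.single k 1) ⬝ᵥ M *ᵥ Pi.single k 1 = M k k := by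
  simp [dotProduct, mulVec_single, Pi.single_apply, apply_ite]

/-- McCarthy/Uhlmann, matrix case: if `B` determines an exact
interpolation space of exponent `θ` relative to the couple determined by `A`,
then `B = C·A^θ` for some constant `C > 0`. -/
theorem geometric_interpolation (n : ℕ) (θ : ℝ) (hθ : θ ∈ Set.Ioo (0 : ℝ) 1)
    (A B : Matrix (Fin n) (Fin n) ℂ) (hA : A.PosDef) (hB : B.PosDef)
    (htype : ∀ M₀ M₁ : ℝ, 0 < M₀ → 0 < M₁ → ∀ T : Matrix (Fin n) (Fin n) ℂ,
      LoewnerLE (Tᴴ * T) (M₀ • (1 : Matrix (Fin n) (Fin n) ℂ)) →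
      LoewnerLE (Tᴴ * A * T) (M₁ • A) →
      LoewnerLE (Tᴴ * B * T) ((M₀ ^ (1 - θ) * M₁ ^ θ) • B)) :
    ∃ C : ℝ, 0 < C ∧ B = C • matFunCalc (fun l => l ^ θ) A := by
  rcases Nat.eq_zero_or_pos n with hn | hn
  · subst hn
    exact ⟨1, one_pos, by ext i j; exact i.elim0⟩
  have hAH : A.IsHermitian := hA.isHermitian
  set U : Matrix (Fin n) (Fin n) ℂ := (hAH.eigenvectorUnitary : Matrix (Fin n) (Fin n) ℂ)
    with hUdef
  set d : Fin n → ℝ := hAH.eigenvalues with hddef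
  have hd : ∀ k, 0 < d k := fun k => hA.eigenvalues_pos k
  have hUU : star U * U = 1 := Matrix.mem_unitaryGroup_iff'.mp hAH.eigenvectorUnitary.2
  have hUU' : U * star U = 1 := Matrix.mem_unitaryGroup_iff.mp hAH.eigenvectorUnitary.2
  set D : Matrix (Fin n) (Fin n) ℂ := diagonal (fun k => (d k : ℂ)) with hDdef
  have hspec : A = U * D * star U := by
    have := hAH.spectral_theorem
    rw [hDdef]
    exact this
  set B' : Matrix (Fin n) (Fin n) ℂ := star U * B * U with hB'def
  have hBU : B = U * B' * star U := by
    rw [hB'def]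
    calc B = (U * star U) * B * (U * star U) := by rw [hUU']; simp
    _ = U * (star U * B * U) * star U := by noncomm_ring
  -- PSD transfer
  have congrPSD : ∀ X : Matrix (Fin n) (Fin n) ℂ, X.PosSemidef → (U * X * star U).PosSemidef := by
    intro X hX
    rw [star_eq_conjTranspose]
    exact hX.mul_mul_conjTranspose_same U
  have congrPSD' : ∀ X : Matrix (Fin n) (Fin n) ℂ, (U * X * star U).PosSemidef → X.PosSemidef := by
    intro X hX
    have h2 := hX.conjTranspose_mul_mul_same U
    rw [← star_eq_conjTranspose] at h2
    have : star U * (U * X * star U) * U = X := by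
      calc star U * (U * X * star U) * U = (star U * U) * X * (star U * U) := by noncomm_ring
      _ = X := by rw [hUU]; simp
    rwa [this] at h2
  -- B' is positive definite
  have hB'pd : B'.PosDef := by
    refine Matrix.PosDef.of_dotProduct_mulVec_pos ?_ ?_
    · rw [hB'def, star_eq_conjTranspose]
      exact Matrix.isHermitian_conjTranspose_mul_mul U hB.isHermitian
    · intro x hx
      have hUx : U *ᵥ x ≠ 0 := by
        intro h
        apply hx
        have := congrArg (fun v => star U *ᵥ v) h
        simpa [Matrix.mulVec_mulVec, hUU] using this
      have := hB.dotProduct_mulVec_pos hUx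
      rw [hB'def]
      simpa only [star_mulVec, dotProduct_mulVec, vecMul_vecMul, star_eq_conjTranspose]
        using this
  have hβpos : ∀ k, 0 < B' k k := by
    intro k
    have := hB'pd.dotProduct_mulVec_pos (x := Pi.single k 1) (by
      intro h
      have := congrFun h k
      simp at this)
    rwa [aux_entry_eval] at this
  -- the key rigidity: unitaries fixing A fix B
  have key : ∀ T : Matrix (Fin n) (Fin n) ℂ,
      Tᴴ * T = 1 → T * Tᴴ = 1 → Tᴴ * A * T = A → Tᴴ * B * T = B := by
    intro T h1 h2 h3
    have hAa : T * A * Tᴴ = A := by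
      conv_lhs => rw [← h3]
      calc T * (Tᴴ * A * T) * Tᴴ = (T * Tᴴ) * A * (T * Tᴴ) := by noncomm_ring
      _ = A := by rw [h2]; simp
    have l1 := htype 1 1 one_pos one_pos T
      (by rw [LoewnerLE, h1, one_smul, sub_self]; exact .zero)
      (by rw [LoewnerLE, h3, one_smul, sub_self]; exact .zero)
    rw [LoewnerLE] at l1
    rw [Real.one_rpow, Real.one_rpow, mul_one, one_smul] at l1
    have l2 := htype 1 1 one_pos one_pos Tᴴ
      (by rw [LoewnerLE, conjTranspose_conjTranspose, h2, one_smul, sub_self]; exact .zero)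
      (by rw [LoewnerLE, conjTranspose_conjTranspose, hAa, one_smul, sub_self]; exact .zero)
    rw [LoewnerLE, conjTranspose_conjTranspose] at l2
    rw [Real.one_rpow, Real.one_rpow, mul_one, one_smul] at l2
    have l3 : (Tᴴ * B * T - B).PosSemidef := by
      have := l2.conjTranspose_mul_mul_same T
      have e : Tᴴ * (B - T * B * Tᴴ) * T = Tᴴ * B * T - B := by
        have : Tᴴ * (T * B * Tᴴ) * T = (Tᴴ * T) * B * (Tᴴ * T) := by noncomm_ring
        rw [Matrix.mul_sub, Matrix.sub_mul, this, h1]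
        simp
      rwa [e] at this
    have := aux_psd_neg l1 (by rwa [neg_sub])
    rw [sub_eq_zero] at this
    exact this.symm
  -- Step 1: B' is diagonal
  have hB'diag : ∀ i j : Fin n, i ≠ j → B' i j = 0 := by
    intro i j hij
    set s : Fin n → ℂ := fun k => if k = i then -1 else 1 with hs
    have hss : ∀ k, s k * s k = 1 := by
      intro k; simp only [hs]; split_ifs <;> norm_num
    have hsstar : star s = s := by
      funext k; simp only [hs, Pi.star_apply]; split_ifs <;> norm_num
    set S : Matrix (Fin n) (Fin n) ℂ := diagonal s with hS
    have hSh : Sᴴ = S := by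
      rw [hS, diagonal_conjTranspose, hsstar]
    have hSS : S * S = 1 := by
      rw [hS, diagonal_mul_diagonal]
      rw [show (fun k => s k * s k) = fun _ => (1:ℂ) from funext hss]
      exact diagonal_one
    have hSD : S * D = D * S := by
      rw [hS, hDdef, diagonal_mul_diagonal, diagonal_mul_diagonal]
      exact congrArg diagonal (funext fun k => mul_comm _ _)
    set T : Matrix (Fin n) (Fin n) ℂ := U * S * star U with hT
    have hTh : Tᴴ = T := by
      rw [hT]
      rw [conjTranspose_mul, conjTranspose_mul, hSh, ← star_eq_conjTranspose,
        ← star_eq_conjTranspose, star_star]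
      noncomm_ring
    have hTT : T * T = 1 := by
      rw [hT]
      calc (U * S * star U) * (U * S * star U) = U * (S * (star U * U) * S) * star U := by
            noncomm_ring
      _ = 1 := by rw [hUU, mul_one, hSS, mul_one, hUU']
    have hTA : Tᴴ * A * T = A := by
      rw [hTh, hT, hspec]
      calc (U * S * star U) * (U * D * star U) * (U * S * star U)
          = U * (S * (star U * U) * D * (star U * U) * S) * star U := by noncomm_ring
      _ = U * (S * D * S) * star U := by rw [hUU]; noncomm_ring
      _ = U * D * star U := by
          have : S * D * S = D := by rw [hSD, mul_assoc, hSS, mul_one]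
          rw [this]
    have hTB := key T (by rw [hTh]; exact hTT) (by rw [hTh]; exact hTT) hTA
    rw [hTh, hT] at hTB
    have hSB : S * B' * S = B' := by
      have h := congrArg (fun X => star U * X * U) hTB
      have e : star U * (U * S * star U * B * (U * S * star U)) * U
          = S * (star U * B * U) * S := by
        calc star U * (U * S * star U * B * (U * S * star U)) * U
            = (star U * U) * (S * (star U * B * U) * S) * (star U * U) := by noncomm_ring
        _ = S * (star U * B * U) * S := by rw [hUU]; simp
      rw [e] at h
      exact h
    have := congrFun (congrFun hSB i) j
    rw [hS, Matrix.mul_diagonal, Matrix.diagonal_mul] at this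
    simp [hs, Ne.symm hij] at this
    linear_combination (-(1:ℂ)/2) * this
  -- Step 2: ratio inequality
  have step2 : ∀ i j : Fin n, (B' j j).re ≤ (d j / d i) ^ θ * (B' i i).re := by
    intro i j
    have hM₁ : 0 < d j / d i := div_pos (hd j) (hd i)
    set T : Matrix (Fin n) (Fin n) ℂ := U * Matrix.single j i 1 * star U with hT
    have hTc : Tᴴ = U * Matrix.single i j 1 * star U := by
      rw [hT, conjTranspose_mul, conjTranspose_mul, aux_sbm_conjT, ← star_eq_conjTranspose,
        ← star_eq_conjTranspose, star_star]
      noncomm_ring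
    have hTT : Tᴴ * T = U * Matrix.single i i 1 * star U := by
      rw [hTc, hT]
      calc (U * Matrix.single i j 1 * star U) * (U * Matrix.single j i 1 * star U)
          = U * (Matrix.single i j 1 * (star U * U) * Matrix.single j i 1) * star U := by
            noncomm_ring
      _ = U * Matrix.single i i 1 * star U := by
            rw [hUU, aux_sbm_mul, one_apply_eq]
    have cond1 : LoewnerLE (Tᴴ * T) ((1:ℝ) • (1 : Matrix (Fin n) (Fin n) ℂ)) := by
      rw [LoewnerLE, hTT, one_smul]
      have e : U * ((1 : Matrix (Fin n) (Fin n) ℂ) - Matrix.single i i 1) * star U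
          = 1 - U * Matrix.single i i 1 * star U := by
        rw [Matrix.mul_sub, Matrix.sub_mul, mul_one, hUU']
      rw [← e]
      apply congrPSD
      rw [aux_sbm_diag, ← diagonal_one, diagonal_sub]
      refine posSemidef_diagonal_iff.mpr fun k => ?_
      by_cases hk : k = i <;>
        simp [Pi.single_apply, hk, Pi.sub_apply]
    have hTAT : Tᴴ * A * T = U * Matrix.single i i ((d j : ℂ)) * star U := by
      rw [hTc, hT, hspec]
      calc (U * Matrix.single i j 1 * star U) * (U * D * star U)
            * (U * Matrix.single j i 1 * star U)
          = U * (Matrix.single i j 1 * (star U * U) * D * (star U * U)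
              * Matrix.single j i 1) * star U := by noncomm_ring
      _ = U * Matrix.single i i ((d j : ℂ)) * star U := by
            rw [hUU, mul_one, mul_one, aux_sbm_mul, hDdef, diagonal_apply_eq]
    have cond2 : LoewnerLE (Tᴴ * A * T) ((d j / d i) • A) := by
      rw [LoewnerLE, hTAT]
      have e2 : U * ((d j / d i) • D - Matrix.single i i ((d j : ℂ))) * star U
          = (d j / d i) • A - U * Matrix.single i i ((d j : ℂ)) * star U := by
        rw [Matrix.mul_sub, Matrix.sub_mul, hspec, Matrix.mul_smul, Matrix.smul_mul]
      rw [← e2]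
      apply congrPSD
      have e3 : (d j / d i) • D - Matrix.single i i ((d j : ℂ))
          = diagonal (fun k => ((d j / d i * d k - if k = i then d j else 0 : ℝ) : ℂ)) := by
        rw [aux_sbm_diag, hDdef, ← Matrix.diagonal_smul, diagonal_sub]
        refine congrArg diagonal (funext fun k => ?_)
        rcases eq_or_ne k i with rfl | hk
        · simp only [Pi.smul_apply, Pi.single_eq_same, if_pos rfl, Complex.real_smul]
          push_cast; ring
        · simp only [Pi.smul_apply, Pi.single_eq_of_ne hk, if_neg hk, Complex.real_smul]
          push_cast; ring
      rw [e3]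
      refine posSemidef_diagonal_iff.mpr fun k => ?_
      rw [Complex.zero_le_real]
      rcases eq_or_ne k i with rfl | hk
      · rw [if_pos rfl, div_mul_cancel₀ _ (hd k).ne', sub_self]
      · rw [if_neg hk, sub_zero]
        exact (mul_pos (div_pos (hd j) (hd i)) (hd k)).le
    have l := htype 1 (d j / d i) one_pos hM₁ T cond1 cond2
    rw [LoewnerLE, Real.one_rpow, one_mul] at l
    have hTBT : Tᴴ * B * T = U * Matrix.single i i (B' j j) * star U := by
      rw [hTc, hT, hBU]
      calc (U * Matrix.single i j 1 * star U) * (U * B' * star U)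
            * (U * Matrix.single j i 1 * star U)
          = U * (Matrix.single i j 1 * (star U * U) * B' * (star U * U)
              * Matrix.single j i 1) * star U := by noncomm_ring
      _ = U * Matrix.single i i (B' j j) * star U := by
            rw [hUU, mul_one, mul_one, aux_sbm_mul]
    have l' : (((d j / d i) ^ θ : ℝ) • B' - Matrix.single i i (B' j j)).PosSemidef := by
      apply congrPSD'
      have e4 : U * (((d j / d i) ^ θ : ℝ) • B' - Matrix.single i i (B' j j)) * star U
          = ((d j / d i) ^ θ : ℝ) • B - Tᴴ * B * T := by
        rw [Matrix.mul_sub, Matrix.sub_mul, hTBT, hBU, Matrix.mul_smul, Matrix.smul_mul]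
      rw [e4]
      exact l
    have h4 := l'.dotProduct_mulVec_nonneg (Pi.single i 1)
    rw [aux_entry_eval] at h4
    rw [Matrix.sub_apply, Matrix.smul_apply, Matrix.single_apply_same] at h4
    rw [Complex.le_def] at h4
    have h5 := h4.1
    rw [Complex.zero_re, Complex.sub_re, Complex.real_smul, Complex.mul_re,
      Complex.ofReal_re, Complex.ofReal_im] at h5
    simp only [zero_mul, sub_zero] at h5
    linarith
  -- Assemble
  have hβre : ∀ k, 0 < (B' k k).re := fun k => by
    have := (Complex.lt_def.mp (hβpos k)).1
    simpa using this
  have hβim : ∀ k, (B' k k).im = 0 := fun k => by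
    have := (Complex.lt_def.mp (hβpos k)).2
    simpa using this.symm
  have hq : ∀ k, 0 < (d k) ^ θ := fun k => Real.rpow_pos_of_pos (hd k) θ
  have cross : ∀ k l : Fin n, (B' k k).re * (d l) ^ θ ≤ (d k) ^ θ * (B' l l).re := by
    intro k l
    have h := step2 l k
    rw [Real.div_rpow (hd k).le (hd l).le] at h
    have h2 := mul_le_mul_of_nonneg_right h (hq l).le
    calc (B' k k).re * (d l) ^ θ ≤ ((d k) ^ θ / (d l) ^ θ * (B' l l).re) * (d l) ^ θ := h2
    _ = (d k) ^ θ * (B' l l).re := by field_simp [(hq l).ne']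
  set i₀ : Fin n := ⟨0, hn⟩ with hi₀
  set C : ℝ := (B' i₀ i₀).re / (d i₀) ^ θ with hCdef
  have hCpos : 0 < C := div_pos (hβre i₀) (hq i₀)
  have hβeq : ∀ k, (B' k k).re = C * (d k) ^ θ := by
    intro k
    have heq : (B' k k).re * (d i₀) ^ θ = (d k) ^ θ * (B' i₀ i₀).re :=
      le_antisymm (cross k i₀) (by have := cross i₀ k; linarith)
    rw [hCdef, div_mul_eq_mul_div, eq_div_iff (hq i₀).ne']
    linarith [heq]
  have hB'eq : B' = diagonal (fun k => ((C * (d k) ^ θ : ℝ) : ℂ)) := by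
    ext a b
    rcases eq_or_ne a b with rfl | hab
    · rw [diagonal_apply_eq]
      apply Complex.ext
      · simpa using hβeq a
      · simp [hβim a]
    · rw [diagonal_apply_ne _ hab, hB'diag a b hab]
  refine ⟨C, hCpos, ?_⟩
  rw [matFunCalc, dif_pos hAH, ← hUdef, ← hddef, hBU, hB'eq]
  have e5 : C • (U * diagonal (fun k => ((d k ^ θ : ℝ) : ℂ)) * star U)
      = U * (C • diagonal (fun k => ((d k ^ θ : ℝ) : ℂ))) * star U := by
    rw [Matrix.mul_smul, Matrix.smul_mul]
  have e6 : C • diagonal (fun k => ((d k ^ θ : ℝ) : ℂ))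
      = diagonal (fun k => ((C * (d k) ^ θ : ℝ) : ℂ)) := by
    rw [← Matrix.diagonal_smul]
    refine congrArg diagonal (funext fun k => ?_)
    rw [Pi.smul_apply, Complex.real_smul]
    push_cast
    ring
  rw [e5, e6]
end

section
/- Let n be a positive integer and let h : (0,∞) → (0,∞) be such that for every positive definite Hermitian A ∈ M_{2n}(ℂ) and every T ∈ M_{2n}(ℂ), the conditions TᴴT ≤ I and TᴴAT ≤ A imply Tᴴh(A)T ≤ h(A). Then h is matrix monotone of order n: for all positive definite Hermitian A₁, A₂ ∈ Mₙ(ℂ) with A₁ ≤ A₂ one has h(A₁) ≤ h(A₂). -/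
open Matrix MeasureTheory
open scoped ComplexOrder

section aux

variable {m : Type*} [Fintype m] [DecidableEq m]

/-- Intertwining diagonal matrices passes through a scalar function. -/
lemma intertwine_diag (h : ℝ → ℝ) (W : Matrix m m ℂ) (d e : m → ℝ)
    (H : W * diagonal (fun i => (d i : ℂ)) = diagonal (fun i => (e i : ℂ)) * W) :
    W * diagonal (fun i => (h (d i) : ℂ)) = diagonal (fun i => (h (e i) : ℂ)) * W := by
  ext i j
  have H' : W i j * (d j : ℂ) = (e i : ℂ) * W i j := by
    have := (Matrix.ext_iff.2 H) i j
    simpa [mul_diagonal, diagonal_mul] using this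
  rw [mul_diagonal, diagonal_mul]
  rcases eq_or_ne (W i j) 0 with h0 | h0
  · simp [h0]
  · have hde : (d j : ℂ) = (e i : ℂ) :=
      mul_right_cancel₀ h0 (by rw [mul_comm] at H'; exact H')
    have : d j = e i := by exact_mod_cast hde
    rw [this, mul_comm]

/-- Conjugation by a unitary of a positive definite matrix is positive definite. -/
lemma posDef_unitary_conj {D U : Matrix m m ℂ} (hD : D.PosDef)
    (hU1 : U * Uᴴ = 1) (hU2 : Uᴴ * U = 1) : (U * D * Uᴴ).PosDef := by
  refine posDef_iff_dotProduct_mulVec.mpr ⟨?_, fun x hx => ?_⟩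
  · simp only [IsHermitian, conjTranspose_mul, conjTranspose_conjTranspose, hD.1.eq, mul_assoc]
  · have hy : Uᴴ *ᵥ x ≠ 0 := by
      intro hy0
      apply hx
      have : (U * Uᴴ) *ᵥ x = U *ᵥ (Uᴴ *ᵥ x) := by rw [mulVec_mulVec]
      rw [hU1, one_mulVec, hy0, mulVec_zero] at this
      exact this
    have key : star x ⬝ᵥ ((U * D * Uᴴ) *ᵥ x)
        = star (Uᴴ *ᵥ x) ⬝ᵥ (D *ᵥ (Uᴴ *ᵥ x)) := by
      rw [star_mulVec, conjTranspose_conjTranspose, ← mulVec_mulVec, ← mulVec_mulVec,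
        dotProduct_mulVec]
    rw [key]
    exact hD.dotProduct_mulVec_pos hy

end aux

/-- `matFunCalc` does not depend on the choice of spectral decomposition. -/
lemma matFunCalc_eq_of_decomp {k : ℕ} (h : ℝ → ℝ) (A U : Matrix (Fin k) (Fin k) ℂ)
    (hU1 : U * Uᴴ = 1) (hU2 : Uᴴ * U = 1) (d : Fin k → ℝ)
    (hA : A = U * diagonal (fun i => (d i : ℂ)) * Uᴴ) :
    matFunCalc h A = U * diagonal (fun i => (h (d i) : ℂ)) * Uᴴ := by
  have hdiagH : (diagonal fun i => ((d i : ℂ)))ᴴ = diagonal fun i => ((d i : ℂ)) := by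
    have hs : (star fun i => ((d i : ℂ))) = fun i => ((d i : ℂ)) := by
      funext i
      exact Complex.conj_ofReal (d i)
    rw [diagonal_conjTranspose, hs]
  have hherm : A.IsHermitian := by
    rw [hA]
    show _ᴴ = _
    rw [conjTranspose_mul, conjTranspose_mul, conjTranspose_conjTranspose, hdiagH, mul_assoc]
  rw [matFunCalc, dif_pos hherm]
  set V : Matrix (Fin k) (Fin k) ℂ := (hherm.eigenvectorUnitary : Matrix (Fin k) (Fin k) ℂ) with hVdef
  have hVmem := hherm.eigenvectorUnitary.2
  have hV1 : V * Vᴴ = 1 := by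
    have := Matrix.mem_unitaryGroup_iff.mp hVmem
    rwa [star_eq_conjTranspose] at this
  have hV2 : Vᴴ * V = 1 := by
    have := Matrix.mem_unitaryGroup_iff'.mp hVmem
    rwa [star_eq_conjTranspose] at this
  have hspec : A = V * diagonal (fun i => ((hherm.eigenvalues i : ℝ) : ℂ)) * Vᴴ := by
    have := hherm.spectral_theorem
    rwa [Unitary.conjStarAlgAut_apply, star_eq_conjTranspose] at this
  set W : Matrix (Fin k) (Fin k) ℂ := Vᴴ * U with hWdef
  have hcomm : W * diagonal (fun i => (d i : ℂ))
      = diagonal (fun i => ((hherm.eigenvalues i : ℝ) : ℂ)) * W := by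
    have e1 : Vᴴ * A * U = (Vᴴ * U) * diagonal (fun i => (d i : ℂ)) * (Uᴴ * U) := by
      conv_lhs => rw [hA]
      noncomm_ring
    have e2 : Vᴴ * A * U
        = (Vᴴ * V) * (diagonal (fun i => ((hherm.eigenvalues i : ℝ) : ℂ)) * (Vᴴ * U)) := by
      conv_lhs => rw [hspec]
      noncomm_ring
    rw [hU2, mul_one, ← hWdef] at e1
    rw [hV2, one_mul, ← hWdef] at e2
    exact e1.symm.trans e2
  have hcomm2 := intertwine_diag h W d hherm.eigenvalues hcomm
  have hUVW : U = V * W := by rw [hWdef, ← mul_assoc, hV1, one_mul]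
  have hWW : W * Wᴴ = 1 := by
    rw [hWdef, conjTranspose_mul, conjTranspose_conjTranspose]
    calc Vᴴ * U * (Uᴴ * V) = Vᴴ * (U * Uᴴ) * V := by noncomm_ring
    _ = 1 := by rw [hU1, mul_one, hV2]
  rw [star_eq_conjTranspose, hUVW, conjTranspose_mul]
  have expand : V * W * diagonal (fun i => ((h (d i) : ℝ) : ℂ)) * (Wᴴ * Vᴴ)
      = V * (W * diagonal (fun i => ((h (d i) : ℝ) : ℂ)) * Wᴴ) * Vᴴ := by noncomm_ring
  rw [expand, hcomm2, mul_assoc (diagonal _) W Wᴴ, hWW, mul_one]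


section blocks

variable {l m : Type*} [Fintype l] [Fintype m] [DecidableEq l] [DecidableEq m]

lemma fromBlocks_sub (A A' : Matrix l l ℂ) (B B' : Matrix l m ℂ) (C C' : Matrix m l ℂ)
    (D D' : Matrix m m ℂ) :
    fromBlocks A B C D - fromBlocks A' B' C' D'
      = fromBlocks (A - A') (B - B') (C - C') (D - D') := by
  ext i j
  cases i <;> cases j <;> rfl

lemma posSemidef_fromBlocks_diag {B : Matrix l l ℂ} {C : Matrix m m ℂ}
    (hB : B.PosSemidef) (hC : C.PosSemidef) : (fromBlocks B 0 0 C).PosSemidef := by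
  refine posSemidef_iff_dotProduct_mulVec.mpr ⟨?_, ?_⟩
  · show _ᴴ = _
    rw [fromBlocks_conjTranspose, hB.1.eq, hC.1.eq]
    simp only [conjTranspose_zero]
  · intro x
    have hx : x = Sum.elim (x ∘ Sum.inl) (x ∘ Sum.inr) := (Sum.elim_comp_inl_inr x).symm
    rw [hx, fromBlocks_mulVec]
    have hstar : star (Sum.elim (x ∘ Sum.inl) (x ∘ Sum.inr))
        = Sum.elim (star (x ∘ Sum.inl)) (star (x ∘ Sum.inr)) := by
      funext i; cases i <;> rfl
    rw [hstar]
    simp only [zero_mulVec, add_zero, zero_add]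
    rw [sumElim_dotProduct_sumElim]
    exact add_nonneg (hB.dotProduct_mulVec_nonneg _) (hC.dotProduct_mulVec_nonneg _)

lemma posSemidef_block11 {B : Matrix l l ℂ} {C : Matrix l m ℂ} {D : Matrix m l ℂ}
    {E : Matrix m m ℂ} (H : (fromBlocks B C D E).PosSemidef) : B.PosSemidef := by
  have h2 := H.submatrix Sum.inl
  have hBe : (fromBlocks B C D E).submatrix (Sum.inl : l → l ⊕ m) Sum.inl = B := by
    ext i j; rfl
  rwa [hBe] at h2

end blocks


/-- inclusion `C_{2n} ⊆ P'_n`: if `h` is an exact interpolation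
function for all positive definite matrices of order `2n`, then `h` is matrix
monotone of order `n`. -/
theorem interpolation_implies_monotone (n : ℕ) (hn : 0 < n)
    (h : ℝ → ℝ) (hpos : ∀ x : ℝ, 0 < x → 0 < h x)
    (hyp : ∀ A : Matrix (Fin (2 * n)) (Fin (2 * n)) ℂ, A.PosDef →
      ∀ T : Matrix (Fin (2 * n)) (Fin (2 * n)) ℂ,
        LoewnerLE (Tᴴ * T) 1 → LoewnerLE (Tᴴ * A * T) A →
        LoewnerLE (Tᴴ * matFunCalc h A * T) (matFunCalc h A)) :
    ∀ A₁ A₂ : Matrix (Fin n) (Fin n) ℂ, A₁.PosDef → A₂.PosDef →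
      LoewnerLE A₁ A₂ → LoewnerLE (matFunCalc h A₁) (matFunCalc h A₂) := by
  intro A₁ A₂ h1 h2 h12
  have hh1 : A₁.IsHermitian := h1.1
  have hh2 : A₂.IsHermitian := h2.1
  set V₁ : Matrix (Fin n) (Fin n) ℂ := (hh1.eigenvectorUnitary : Matrix (Fin n) (Fin n) ℂ)
    with hV₁def
  set V₂ : Matrix (Fin n) (Fin n) ℂ := (hh2.eigenvectorUnitary : Matrix (Fin n) (Fin n) ℂ)
    with hV₂def
  have hV₁1 : V₁ * V₁ᴴ = 1 := by
    have := Matrix.mem_unitaryGroup_iff.mp hh1.eigenvectorUnitary.2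
    rwa [star_eq_conjTranspose] at this
  have hV₁2 : V₁ᴴ * V₁ = 1 := by
    have := Matrix.mem_unitaryGroup_iff'.mp hh1.eigenvectorUnitary.2
    rwa [star_eq_conjTranspose] at this
  have hV₂1 : V₂ * V₂ᴴ = 1 := by
    have := Matrix.mem_unitaryGroup_iff.mp hh2.eigenvectorUnitary.2
    rwa [star_eq_conjTranspose] at this
  have hV₂2 : V₂ᴴ * V₂ = 1 := by
    have := Matrix.mem_unitaryGroup_iff'.mp hh2.eigenvectorUnitary.2
    rwa [star_eq_conjTranspose] at this
  have S₁ : A₁ = V₁ * diagonal (fun i => ((hh1.eigenvalues i : ℝ) : ℂ)) * V₁ᴴ := by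
    have := hh1.spectral_theorem
    rwa [Unitary.conjStarAlgAut_apply, star_eq_conjTranspose] at this
  have S₂ : A₂ = V₂ * diagonal (fun i => ((hh2.eigenvalues i : ℝ) : ℂ)) * V₂ᴴ := by
    have := hh2.spectral_theorem
    rwa [Unitary.conjStarAlgAut_apply, star_eq_conjTranspose] at this
  -- the reindexing equivalence
  set e : Fin (2 * n) ≃ (Fin n ⊕ Fin n) := (finCongr (two_mul n)).trans finSumFinEquiv.symm
    with hedef
  have hlift_mul : ∀ M N : Matrix (Fin n ⊕ Fin n) (Fin n ⊕ Fin n) ℂ,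
      (M.submatrix e e) * (N.submatrix e e) = (M * N).submatrix e e := fun M N =>
    submatrix_mul_equiv M N e e e
  have hlift_ct : ∀ M : Matrix (Fin n ⊕ Fin n) (Fin n ⊕ Fin n) ℂ,
      (M.submatrix e e)ᴴ = Mᴴ.submatrix e e := fun M => conjTranspose_submatrix M e e
  have hlift_one : ((1 : Matrix (Fin n ⊕ Fin n) (Fin n ⊕ Fin n) ℂ).submatrix e e) = 1 :=
    submatrix_one_equiv e
  have hlift_sub : ∀ M N : Matrix (Fin n ⊕ Fin n) (Fin n ⊕ Fin n) ℂ,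
      (M.submatrix e e) - (N.submatrix e e) = (M - N).submatrix e e := fun M N => rfl
  set Abig : Matrix (Fin (2 * n)) (Fin (2 * n)) ℂ := (fromBlocks A₂ 0 0 A₁).submatrix e e
    with hAbigdef
  set Ubig : Matrix (Fin (2 * n)) (Fin (2 * n)) ℂ := (fromBlocks V₂ 0 0 V₁).submatrix e e
    with hUbigdef
  set dbig : Fin (2 * n) → ℝ := fun i => Sum.elim hh2.eigenvalues hh1.eigenvalues (e i)
    with hdbigdef
  have hdiag : diagonal (fun i => ((dbig i : ℝ) : ℂ))
      = (fromBlocks (diagonal fun i => ((hh2.eigenvalues i : ℝ) : ℂ)) 0 0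
          (diagonal fun i => ((hh1.eigenvalues i : ℝ) : ℂ))).submatrix e e := by
    rw [fromBlocks_diagonal, submatrix_diagonal_equiv]
    have harg : (fun i => ((dbig i : ℝ) : ℂ))
        = (Sum.elim (fun i => ((hh2.eigenvalues i : ℝ) : ℂ))
            (fun i => ((hh1.eigenvalues i : ℝ) : ℂ)) ∘ e) := by
      funext i
      rcases hi : e i with j | j <;> simp [hdbigdef, Function.comp, hi]
    rw [harg]
  have hdiagh : diagonal (fun i => ((h (dbig i) : ℝ) : ℂ))
      = (fromBlocks (diagonal fun i => ((h (hh2.eigenvalues i) : ℝ) : ℂ)) 0 0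
          (diagonal fun i => ((h (hh1.eigenvalues i) : ℝ) : ℂ))).submatrix e e := by
    rw [fromBlocks_diagonal, submatrix_diagonal_equiv]
    have harg : (fun i => ((h (dbig i) : ℝ) : ℂ))
        = (Sum.elim (fun i => ((h (hh2.eigenvalues i) : ℝ) : ℂ))
            (fun i => ((h (hh1.eigenvalues i) : ℝ) : ℂ)) ∘ e) := by
      funext i
      rcases hi : e i with j | j <;> simp [hdbigdef, Function.comp, hi]
    rw [harg]
  have hU1 : Ubig * Ubigᴴ = 1 := by
    rw [hUbigdef, hlift_ct, hlift_mul, fromBlocks_conjTranspose]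
    rw [show (fromBlocks V₂ 0 0 V₁) * (fromBlocks V₂ᴴ 0ᴴ 0ᴴ V₁ᴴ) = fromBlocks 1 0 0 1 by
      simp [fromBlocks_multiply, -fromBlocks_diagonal, hV₂1, hV₁1]]
    rw [fromBlocks_one, hlift_one]
  have hU2 : Ubigᴴ * Ubig = 1 := by
    rw [hUbigdef, hlift_ct, hlift_mul, fromBlocks_conjTranspose]
    rw [show (fromBlocks V₂ᴴ 0ᴴ 0ᴴ V₁ᴴ) * (fromBlocks V₂ 0 0 V₁) = fromBlocks 1 0 0 1 by
      simp [fromBlocks_multiply, -fromBlocks_diagonal, hV₂2, hV₁2]]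
    rw [fromBlocks_one, hlift_one]
  have hAbig_eq : Abig = Ubig * diagonal (fun i => ((dbig i : ℝ) : ℂ)) * Ubigᴴ := by
    rw [hAbigdef, hUbigdef, hdiag, hlift_ct, hlift_mul, hlift_mul, fromBlocks_conjTranspose]
    congr 1
    rw [show (fromBlocks V₂ 0 0 V₁) *
        (fromBlocks (diagonal fun i => ((hh2.eigenvalues i : ℝ) : ℂ)) 0 0
          (diagonal fun i => ((hh1.eigenvalues i : ℝ) : ℂ))) *
        (fromBlocks V₂ᴴ 0ᴴ 0ᴴ V₁ᴴ)
        = fromBlocks (V₂ * diagonal (fun i => ((hh2.eigenvalues i : ℝ) : ℂ)) * V₂ᴴ) 0 0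
          (V₁ * diagonal (fun i => ((hh1.eigenvalues i : ℝ) : ℂ)) * V₁ᴴ) by
      simp [fromBlocks_multiply, -fromBlocks_diagonal]]
    rw [← S₂, ← S₁]
  have hApos : Abig.PosDef := by
    rw [hAbig_eq]
    refine posDef_unitary_conj ?_ hU1 hU2
    refine Matrix.posDef_diagonal_iff.mpr fun i => ?_
    refine Complex.zero_lt_real.mpr ?_
    rcases hi : e i with j | j
    · simpa [hdbigdef, hi] using h2.eigenvalues_pos j
    · simpa [hdbigdef, hi] using h1.eigenvalues_pos j
  set T : Matrix (Fin (2 * n)) (Fin (2 * n)) ℂ :=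
    (fromBlocks (0 : Matrix (Fin n) (Fin n) ℂ) 0 1 0).submatrix e e with hTdef
  have hTc : Tᴴ = (fromBlocks 0 1 0 0).submatrix e e := by
    rw [hTdef, hlift_ct]
    congr 1
    rw [fromBlocks_conjTranspose]
    simp
  have hT1 : LoewnerLE (Tᴴ * T) 1 := by
    show Matrix.PosSemidef _
    rw [hTc, hTdef, hlift_mul, ← hlift_one, hlift_sub]
    rw [show (fromBlocks 0 1 0 0 : Matrix (Fin n ⊕ Fin n) (Fin n ⊕ Fin n) ℂ) *
        fromBlocks 0 0 1 0 = fromBlocks 1 0 0 0 by simp [fromBlocks_multiply, -fromBlocks_diagonal]]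
    rw [← fromBlocks_one, fromBlocks_sub]
    simp only [sub_self, sub_zero]
    rw [posSemidef_submatrix_equiv]
    exact posSemidef_fromBlocks_diag Matrix.PosSemidef.zero Matrix.PosSemidef.one
  have hTAT : Tᴴ * Abig * T = (fromBlocks A₁ 0 0 0).submatrix e e := by
    rw [hTc, hTdef, hAbigdef, hlift_mul, hlift_mul]
    congr 1
    rw [show (fromBlocks 0 1 0 0 : Matrix (Fin n ⊕ Fin n) (Fin n ⊕ Fin n) ℂ) *
        fromBlocks A₂ 0 0 A₁ = fromBlocks 0 A₁ 0 0 by simp [fromBlocks_multiply, -fromBlocks_diagonal]]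
    simp [fromBlocks_multiply, -fromBlocks_diagonal]
  have hT2 : LoewnerLE (Tᴴ * Abig * T) Abig := by
    show Matrix.PosSemidef _
    rw [hTAT, hAbigdef, hlift_sub, fromBlocks_sub]
    simp only [sub_zero]
    rw [posSemidef_submatrix_equiv]
    exact posSemidef_fromBlocks_diag h12 h1.posSemidef
  have hF2 : matFunCalc h A₂ = V₂ * diagonal (fun i => ((h (hh2.eigenvalues i) : ℝ) : ℂ)) * V₂ᴴ := by
    rw [matFunCalc, dif_pos hh2, star_eq_conjTranspose, hV₂def]
  have hF1 : matFunCalc h A₁ = V₁ * diagonal (fun i => ((h (hh1.eigenvalues i) : ℝ) : ℂ)) * V₁ᴴ := by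
    rw [matFunCalc, dif_pos hh1, star_eq_conjTranspose, hV₁def]
  have hF : matFunCalc h Abig
      = (fromBlocks (matFunCalc h A₂) 0 0 (matFunCalc h A₁)).submatrix e e := by
    rw [matFunCalc_eq_of_decomp h Abig Ubig hU1 hU2 dbig hAbig_eq]
    rw [hUbigdef, hdiagh, hlift_ct, hlift_mul, hlift_mul, fromBlocks_conjTranspose]
    congr 1
    rw [hF2, hF1]
    simp [fromBlocks_multiply, -fromBlocks_diagonal]
  have key := hyp Abig hApos T hT1 hT2
  show Matrix.PosSemidef _
  have hTFT : Tᴴ * matFunCalc h Abig * T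
      = (fromBlocks (matFunCalc h A₁) 0 0 0).submatrix e e := by
    rw [hTc, hTdef, hF, hlift_mul, hlift_mul]
    congr 1
    rw [show (fromBlocks 0 1 0 0 : Matrix (Fin n ⊕ Fin n) (Fin n ⊕ Fin n) ℂ) *
        fromBlocks (matFunCalc h A₂) 0 0 (matFunCalc h A₁)
        = fromBlocks 0 (matFunCalc h A₁) 0 0 by simp [fromBlocks_multiply, -fromBlocks_diagonal]]
    simp [fromBlocks_multiply, -fromBlocks_diagonal]
  rw [LoewnerLE, hTFT, hF, hlift_sub, fromBlocks_sub] at key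
  simp only [sub_zero] at key
  rw [posSemidef_submatrix_equiv] at key
  exact posSemidef_block11 key
end

section
/- Let A ∈ Mₙ(ℂ) be positive definite Hermitian and h : (0,∞) → (0,∞). Define h̃(λ) = λ·h(1/λ) and h*(λ) = 1/h(1/λ). Then the following are equivalent: (i) for every T ∈ Mₙ(ℂ), TᴴT ≤ I and TᴴAT ≤ A imply Tᴴh(A)T ≤ h(A); (ii) for every T ∈ Mₙ(ℂ), TᴴT ≤ I and TᴴA⁻¹T ≤ A⁻¹ imply Tᴴh̃(A⁻¹)T ≤ h̃(A⁻¹); (iii) for every T ∈ Mₙ(ℂ), TᴴT ≤ I and TᴴA⁻¹T ≤ A⁻¹ imply Tᴴh*(A⁻¹)T ≤ h*(A⁻¹). -/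
open Matrix MeasureTheory
open scoped ComplexOrder

lemma contOn_finite (f : ℝ → ℝ) {s : Set ℝ} (hs : s.Finite) : ContinuousOn f s := by
  have : DiscreteTopology s := by have := hs.to_subtype; exact inferInstance
  rw [continuousOn_iff_continuous_restrict]
  fun_prop

lemma contOn_spec (f : ℝ → ℝ) (A : Matrix (Fin n) (Fin n) ℂ) :
    ContinuousOn f (spectrum ℝ A) := contOn_finite f A.finite_real_spectrum

lemma cfc_inv_eq {A : Matrix (Fin n) (Fin n) ℂ} (hA : A.IsHermitian) {f : ℝ → ℝ}
    (hf : ∀ x ∈ spectrum ℝ A, f x ≠ 0) :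
    (cfc f A)⁻¹ = cfc (fun x => (f x)⁻¹) A := by
  have hsa : IsSelfAdjoint A := hA
  apply Matrix.inv_eq_left_inv
  rw [← cfc_mul _ _ A (contOn_spec _ A) (contOn_spec _ A)]
  rw [cfc_congr (g := fun _ : ℝ => (1:ℝ)) (fun x hx => by
    field_simp [hf x hx])]
  exact cfc_const_one ℝ A

lemma posDef_of_isUnit {M : Matrix (Fin n) (Fin n) ℂ} (hM : M.PosSemidef) (hU : IsUnit M) :
    M.PosDef := by
  refine posDef_iff_dotProduct_mulVec.mpr ⟨hM.isHermitian, fun x hx => ?_⟩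
  rcases lt_or_eq_of_le (hM.dotProduct_mulVec_nonneg x) with hlt | heq
  · exact hlt
  · exfalso; apply hx
    have h0 := (hM.dotProduct_mulVec_zero_iff x).mp heq.symm
    have h1 : M⁻¹ *ᵥ (M *ᵥ x) = 0 := by rw [h0, Matrix.mulVec_zero]
    rwa [Matrix.mulVec_mulVec, Matrix.nonsing_inv_mul M
      ((Matrix.isUnit_iff_isUnit_det M).mp hU), Matrix.one_mulVec] at h1

lemma cfc_posDef {A : Matrix (Fin n) (Fin n) ℂ} (hA : A.IsHermitian) {f : ℝ → ℝ}
    (hf : ∀ x ∈ spectrum ℝ A, 0 < f x) : (cfc f A).PosDef := by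
  have hsa : IsSelfAdjoint A := hA
  have hherm : (cfc f A).IsHermitian := (cfc_predicate f A : IsSelfAdjoint _)
  have hpsd : (cfc f A).PosSemidef := by
    have hg : cfc f A = cfc (fun x => Real.sqrt (f x)) A * (cfc (fun x => Real.sqrt (f x)) A)ᴴ := by
      have hherm2 : (cfc (fun x => Real.sqrt (f x)) A).IsHermitian :=
        (cfc_predicate _ A : IsSelfAdjoint _)
      rw [hherm2.eq, ← cfc_mul _ _ A (contOn_spec _ A) (contOn_spec _ A)]
      exact (cfc_congr (fun x hx => (Real.mul_self_sqrt (hf x hx).le).symm))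
    rw [hg]; exact Matrix.posSemidef_self_mul_conjTranspose _
  refine posDef_of_isUnit hpsd ?_
  have h1 : cfc f A * cfc (fun x => (f x)⁻¹) A = 1 := by
    rw [← cfc_mul _ _ A (contOn_spec _ A) (contOn_spec _ A),
      cfc_congr (g := fun _ : ℝ => (1:ℝ)) (fun x hx => by field_simp [(hf x hx).ne'])]
    exact cfc_const_one ℝ A
  have h2 : cfc (fun x => (f x)⁻¹) A * cfc f A = 1 := by
    rw [← cfc_mul _ _ A (contOn_spec _ A) (contOn_spec _ A),
      cfc_congr (g := fun _ : ℝ => (1:ℝ)) (fun x hx => by field_simp [(hf x hx).ne'])]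
    exact cfc_const_one ℝ A
  exact ⟨⟨cfc f A, cfc (fun x => (f x)⁻¹) A, h1, h2⟩, rfl⟩

lemma conj_sub {X Y R : Matrix (Fin n) (Fin n) ℂ} (h : (Y - X).PosSemidef) (hR : R.IsHermitian) :
    (R * Y * R - R * X * R).PosSemidef := by
  have h2 := h.mul_mul_conjTranspose_same R
  rwa [hR.eq, Matrix.mul_sub, Matrix.sub_mul] at h2

lemma shift_psd {T : Matrix (Fin n) (Fin n) ℂ} (h : (1 - Tᴴ * T).PosSemidef) :
    (1 - T * Tᴴ).PosSemidef := by
  have hP : (T * Tᴴ).PosSemidef := Matrix.posSemidef_self_mul_conjTranspose T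
  have h2 : ((T * Tᴴ) - (T * Tᴴ) * (T * Tᴴ)).PosSemidef := by
    have := h.mul_mul_conjTranspose_same T
    simpa [Matrix.mul_sub, Matrix.sub_mul, Matrix.mul_assoc, Matrix.mul_one] using this
  set P := T * Tᴴ with hPdef
  have hPh := hP.isHermitian
  set U : Matrix (Fin n) (Fin n) ℂ := (hPh.eigenvectorUnitary : Matrix (Fin n) (Fin n) ℂ) with hUdef
  have hU1 : U * star U = 1 := (Matrix.mem_unitaryGroup_iff).mp hPh.eigenvectorUnitary.2
  have hU2 : star U * U = 1 := (Matrix.mem_unitaryGroup_iff').mp hPh.eigenvectorUnitary.2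
  have hD : star U * P * U = diagonal (RCLike.ofReal ∘ hPh.eigenvalues) :=
    by
      have e : P = U * diagonal (RCLike.ofReal ∘ hPh.eigenvalues) * star U := by
        have := hPh.spectral_theorem; rwa [Unitary.conjStarAlgAut_apply] at this
      calc star U * P * U = star U * (U * diagonal (RCLike.ofReal ∘ hPh.eigenvalues) * star U) * U := by
            rw [← e]
        _ = (star U * U) * diagonal (RCLike.ofReal ∘ hPh.eigenvalues) * (star U * U) := by noncomm_ring
        _ = diagonal (RCLike.ofReal ∘ hPh.eigenvalues) := by rw [hU2, one_mul, mul_one]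
  set D : Matrix (Fin n) (Fin n) ℂ := diagonal (RCLike.ofReal ∘ hPh.eigenvalues) with hDdef
  have h3 : (D - D * D).PosSemidef := by
    have h4 := h2.mul_mul_conjTranspose_same (star U)
    rw [Matrix.star_eq_conjTranspose, Matrix.conjTranspose_conjTranspose] at h4
    have e1 : (star U) * (P - P * P) * U = D - D * D := by
      rw [Matrix.mul_sub, Matrix.sub_mul, hD]
      congr 1
      calc star U * (P * P) * U = (star U * P) * (U * star U) * (P * U) := by
            rw [hU1]; noncomm_ring
        _ = (star U * P * U) * (star U * P * U) := by noncomm_ring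
        _ = D * D := by rw [hD]
    rwa [← Matrix.star_eq_conjTranspose, e1] at h4
  have key : ∀ i, hPh.eigenvalues i ≤ 1 := by
    intro i
    have h5 : D - D * D = diagonal (fun i => ((hPh.eigenvalues i - hPh.eigenvalues i ^ 2 : ℝ) : ℂ)) := by
      rw [hDdef, Matrix.diagonal_mul_diagonal, Matrix.diagonal_sub]
      congr 1; funext i; simp [Function.comp]; push_cast; ring
    rw [h5] at h3
    have h6 := (Matrix.posSemidef_diagonal_iff).mp h3 i
    have h7 : (0:ℝ) ≤ hPh.eigenvalues i - hPh.eigenvalues i ^ 2 := by exact_mod_cast h6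
    have h8 := hP.eigenvalues_nonneg i
    nlinarith
  have h9 : (1 : Matrix (Fin n) (Fin n) ℂ) - D
      = diagonal (fun i => ((1 - hPh.eigenvalues i : ℝ) : ℂ)) := by
    rw [hDdef, ← Matrix.diagonal_one, Matrix.diagonal_sub]
    congr 1; funext i; simp [Function.comp]
  have e2 : 1 - P = U * (diagonal (fun i => ((1 - hPh.eigenvalues i : ℝ) : ℂ))) * star U := by
    conv_lhs => rw [hPh.spectral_theorem, Unitary.conjStarAlgAut_apply]
    rw [← hDdef, ← h9, Matrix.mul_sub, Matrix.sub_mul, Matrix.mul_one, hU1]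
  rw [e2]
  have h10 : (diagonal (fun i => ((1 - hPh.eigenvalues i : ℝ) : ℂ))).PosSemidef :=
    Matrix.posSemidef_diagonal_iff.mpr (fun i => by
      have : (0:ℝ) ≤ 1 - hPh.eigenvalues i := by linarith [key i]
      exact_mod_cast this)
  have h11 := h10.mul_mul_conjTranspose_same U
  rwa [← Matrix.star_eq_conjTranspose] at h11

open scoped MatrixOrder in
lemma posDef_sqrt {M : Matrix (Fin n) (Fin n) ℂ} (hM : M.PosDef) :
    (CFC.sqrt M).PosDef := by
  set R := CFC.sqrt M with hRdef
  have hRR : R * R = M := CFC.sqrt_mul_sqrt_self M hM.posSemidef.nonneg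
  have hdet : R.det * R.det = M.det := by rw [← Matrix.det_mul, hRR]
  have hMdet : M.det ≠ 0 := hM.det_pos.ne'
  have hRdet : R.det ≠ 0 := fun h0 => hMdet (by rw [← hdet, h0, zero_mul])
  exact posDef_of_isUnit (CFC.sqrt_nonneg M).posSemidef
    ((Matrix.isUnit_iff_isUnit_det R).mpr (isUnit_iff_ne_zero.mpr hRdet))

open scoped MatrixOrder in
lemma dual_forward {M T : Matrix (Fin n) (Fin n) ℂ} (hM : M.PosDef)
    (h : (M - Tᴴ * M * T).PosSemidef) :
    (M⁻¹ - T * M⁻¹ * Tᴴ).PosSemidef := by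
  set R := CFC.sqrt M with hRdef
  have hR : R.PosDef := posDef_sqrt hM
  have hRh : R.IsHermitian := hR.isHermitian
  have hRR : R * R = M := CFC.sqrt_mul_sqrt_self M hM.posSemidef.nonneg
  have hRdet : IsUnit R.det := (Matrix.isUnit_iff_isUnit_det R).mp hR.isUnit
  have hRiR : R⁻¹ * R = 1 := Matrix.nonsing_inv_mul R hRdet
  have hRRi : R * R⁻¹ = 1 := Matrix.mul_nonsing_inv R hRdet
  have hMinv : M⁻¹ = R⁻¹ * R⁻¹ := by rw [← hRR, Matrix.mul_inv_rev]
  set S := R * T * R⁻¹ with hSdef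
  have hSH : Sᴴ = R⁻¹ * Tᴴ * R := by
    rw [hSdef, Matrix.conjTranspose_mul, Matrix.conjTranspose_mul, hRh.inv.eq, hRh.eq]
    noncomm_ring
  have h1 : (1 - Sᴴ * S).PosSemidef := by
    have h2 := conj_sub h hRh.inv
    have e1 : R⁻¹ * M * R⁻¹ = 1 := by
      rw [← hRR]
      calc R⁻¹ * (R * R) * R⁻¹ = (R⁻¹ * R) * (R * R⁻¹) := by noncomm_ring
        _ = 1 := by rw [hRiR, hRRi, one_mul]
    have e2 : R⁻¹ * (Tᴴ * M * T) * R⁻¹ = Sᴴ * S := by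
      rw [hSH, hSdef, ← hRR]; noncomm_ring
    rwa [e1, e2] at h2
  have h3 : (1 - S * Sᴴ).PosSemidef := shift_psd h1
  have h4 := conj_sub h3 hRh.inv
  have e3 : R⁻¹ * 1 * R⁻¹ = M⁻¹ := by rw [Matrix.mul_one, hMinv]
  have e4 : R⁻¹ * (S * Sᴴ) * R⁻¹ = T * M⁻¹ * Tᴴ := by
    rw [hSdef, hSH, hMinv]
    calc R⁻¹ * (R * T * R⁻¹ * (R⁻¹ * Tᴴ * R)) * R⁻¹
        = (R⁻¹ * R) * (T * (R⁻¹ * R⁻¹) * Tᴴ) * (R * R⁻¹) := by noncomm_ring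
      _ = T * (R⁻¹ * R⁻¹) * Tᴴ := by rw [hRiR, hRRi, one_mul, Matrix.mul_one]
  rwa [e3, e4] at h4

def IntCond {n : ℕ} (B G : Matrix (Fin n) (Fin n) ℂ) : Prop :=
  ∀ T : Matrix (Fin n) (Fin n) ℂ, (1 - Tᴴ * T).PosSemidef → (B - Tᴴ * B * T).PosSemidef →
    (G - Tᴴ * G * T).PosSemidef

lemma dual_cond {A H : Matrix (Fin n) (Fin n) ℂ} (hA : A.PosDef) (hH : H.PosDef)
    (c : IntCond A H) : IntCond A⁻¹ H⁻¹ := by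
  intro T hT1 hTA
  have hAdet : IsUnit A.det := (Matrix.isUnit_iff_isUnit_det A).mp hA.isUnit
  have hAii : A⁻¹⁻¹ = A := Matrix.nonsing_inv_nonsing_inv A hAdet
  have h1' : (1 - (Tᴴ)ᴴ * Tᴴ).PosSemidef := by
    rw [Matrix.conjTranspose_conjTranspose]; exact shift_psd hT1
  have h2' : (A - (Tᴴ)ᴴ * A * Tᴴ).PosSemidef := by
    rw [Matrix.conjTranspose_conjTranspose]
    have := dual_forward hA.inv hTA
    rwa [hAii] at this
  have h3 := c Tᴴ h1' h2'
  have h4 := dual_forward hH h3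
  rwa [Matrix.conjTranspose_conjTranspose] at h4

lemma shift_cond {A H R : Matrix (Fin n) (Fin n) ℂ} (hA : A.PosDef) (hR : R.PosDef)
    (hRR : R * R = A) (c : IntCond A H) : IntCond A⁻¹ (R⁻¹ * H * R⁻¹) := by
  intro T hT1 hTA
  have hRh : R.IsHermitian := hR.isHermitian
  have hRdet : IsUnit R.det := (Matrix.isUnit_iff_isUnit_det R).mp hR.isUnit
  have hRiR : R⁻¹ * R = 1 := Matrix.nonsing_inv_mul R hRdet
  have hRRi : R * R⁻¹ = 1 := Matrix.mul_nonsing_inv R hRdet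
  have hAinv : A⁻¹ = R⁻¹ * R⁻¹ := by rw [← hRR, Matrix.mul_inv_rev]
  set S := R⁻¹ * T * R with hSdef
  have hSH : Sᴴ = R * Tᴴ * R⁻¹ := by
    rw [hSdef, Matrix.conjTranspose_mul, Matrix.conjTranspose_mul, hRh.inv.eq, hRh.eq]
    noncomm_ring
  have hS1 : (1 - Sᴴ * S).PosSemidef := by
    have h2 := conj_sub hTA hRh
    have e1 : R * A⁻¹ * R = 1 := by
      rw [hAinv]
      calc R * (R⁻¹ * R⁻¹) * R = (R * R⁻¹) * (R⁻¹ * R) := by noncomm_ring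
        _ = 1 := by rw [hRiR, hRRi, one_mul]
    have e2 : R * (Tᴴ * A⁻¹ * T) * R = Sᴴ * S := by
      rw [hSH, hSdef, hAinv]; noncomm_ring
    rwa [e1, e2] at h2
  have hSA : (A - Sᴴ * A * S).PosSemidef := by
    have h2 := conj_sub hT1 hRh
    have e1 : R * 1 * R = A := by rw [Matrix.mul_one, hRR]
    have e2 : R * (Tᴴ * T) * R = Sᴴ * A * S := by
      rw [hSH, hSdef, ← hRR]
      calc R * (Tᴴ * T) * R
          = R * Tᴴ * (R⁻¹ * R) * (R * R⁻¹) * T * R := by rw [hRiR, hRRi]; noncomm_ring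
        _ = R * Tᴴ * R⁻¹ * (R * R) * (R⁻¹ * T * R) := by noncomm_ring
    rwa [e1, e2] at h2
  have h3 := c S hS1 hSA
  have h4 := conj_sub h3 hRh.inv
  have e3 : R⁻¹ * H * R⁻¹ - R⁻¹ * (Sᴴ * H * S) * R⁻¹
      = R⁻¹ * H * R⁻¹ - Tᴴ * (R⁻¹ * H * R⁻¹) * T := by
    congr 1
    rw [hSH, hSdef]
    calc R⁻¹ * (R * Tᴴ * R⁻¹ * H * (R⁻¹ * T * R)) * R⁻¹
        = (R⁻¹ * R) * (Tᴴ * (R⁻¹ * H * R⁻¹) * T) * (R * R⁻¹) := by noncomm_ring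
      _ = Tᴴ * (R⁻¹ * H * R⁻¹) * T := by rw [hRiR, hRRi, one_mul, Matrix.mul_one]
  rwa [e3] at h4

lemma spec_pos {A : Matrix (Fin n) (Fin n) ℂ} (hA : A.PosDef) :
    ∀ x ∈ spectrum ℝ A, 0 < x := by
  intro x hx
  rw [hA.isHermitian.spectrum_real_eq_range_eigenvalues] at hx
  obtain ⟨i, rfl⟩ := hx
  exact hA.eigenvalues_pos i

lemma inv_eq_cfc_inv {A : Matrix (Fin n) (Fin n) ℂ} (hA : A.PosDef) :
    A⁻¹ = cfc (fun x : ℝ => x⁻¹) A := by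
  have hAh : A.IsHermitian := hA.isHermitian
  have hsa : IsSelfAdjoint A := hAh
  conv_lhs => rw [show A = cfc (id : ℝ → ℝ) A from (cfc_id ℝ A hsa).symm]
  exact cfc_inv_eq hAh (fun x hx => (spec_pos hA x hx).ne')

lemma matCfc_comp_inv {A : Matrix (Fin n) (Fin n) ℂ} (hA : A.PosDef) (g : ℝ → ℝ) :
    cfc g A⁻¹ = cfc (fun x => g x⁻¹) A := by
  have hsa : IsSelfAdjoint A := hA.isHermitian
  rw [inv_eq_cfc_inv hA,
    ← cfc_comp g (fun x : ℝ => x⁻¹) A hsa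
      (contOn_finite g ((Matrix.finite_real_spectrum (A := A)).image _)) (contOn_spec _ A)]
  rfl

lemma matFunCalc_eq_cfc {n : ℕ} (h : ℝ → ℝ) {A : Matrix (Fin n) (Fin n) ℂ}
    (hA : A.IsHermitian) : matFunCalc h A = cfc h A := by
  unfold matFunCalc
  rw [dif_pos hA, hA.cfc_eq]
  rfl

/-- Theorem 4.3: with `h̃(λ) = λ·h(1/λ)` and `h*(λ) = 1/h(1/λ)`,
the conditions `h ∈ C_A`, `h̃ ∈ C_{A⁻¹}` and `h* ∈ C_{A⁻¹}` are equivalent. -/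
theorem reverse_and_dual_couple (n : ℕ) (A : Matrix (Fin n) (Fin n) ℂ) (hA : A.PosDef)
    (h : ℝ → ℝ) (hpos : ∀ x : ℝ, 0 < x → 0 < h x) :
    ((∀ T : Matrix (Fin n) (Fin n) ℂ,
        LoewnerLE (Tᴴ * T) 1 → LoewnerLE (Tᴴ * A * T) A →
        LoewnerLE (Tᴴ * matFunCalc h A * T) (matFunCalc h A)) ↔
      (∀ T : Matrix (Fin n) (Fin n) ℂ,
        LoewnerLE (Tᴴ * T) 1 → LoewnerLE (Tᴴ * A⁻¹ * T) A⁻¹ →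
        LoewnerLE (Tᴴ * matFunCalc (fun l => l * h (1 / l)) A⁻¹ * T)
          (matFunCalc (fun l => l * h (1 / l)) A⁻¹))) ∧
    ((∀ T : Matrix (Fin n) (Fin n) ℂ,
        LoewnerLE (Tᴴ * T) 1 → LoewnerLE (Tᴴ * A * T) A →
        LoewnerLE (Tᴴ * matFunCalc h A * T) (matFunCalc h A)) ↔
      (∀ T : Matrix (Fin n) (Fin n) ℂ,
        LoewnerLE (Tᴴ * T) 1 → LoewnerLE (Tᴴ * A⁻¹ * T) A⁻¹ →
        LoewnerLE (Tᴴ * matFunCalc (fun l => 1 / h (1 / l)) A⁻¹ * T)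
          (matFunCalc (fun l => 1 / h (1 / l)) A⁻¹))) := by
  have hAh := hA.isHermitian
  have hsa : IsSelfAdjoint A := hAh
  have hAdet : IsUnit A.det := (Matrix.isUnit_iff_isUnit_det A).mp hA.isUnit
  have hAinv : A⁻¹.PosDef := hA.inv
  have hAii : A⁻¹⁻¹ = A := Matrix.nonsing_inv_nonsing_inv A hAdet
  have hspos := spec_pos hA
  have hHeq : matFunCalc h A = cfc h A := matFunCalc_eq_cfc h hAh
  set H := cfc h A with hHdef
  have hH : H.PosDef := cfc_posDef hAh (fun x hx => hpos x (hspos x hx))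
  have hHdet : IsUnit H.det := (Matrix.isUnit_iff_isUnit_det H).mp hH.isUnit
  have hHii : H⁻¹⁻¹ = H := Matrix.nonsing_inv_nonsing_inv H hHdet
  set R := cfc Real.sqrt A with hRdef
  have hR : R.PosDef := cfc_posDef hAh (fun x hx => Real.sqrt_pos.mpr (hspos x hx))
  have hRdet : IsUnit R.det := (Matrix.isUnit_iff_isUnit_det R).mp hR.isUnit
  have hRR : R * R = A := by
    have e : cfc (fun x => Real.sqrt x * Real.sqrt x) A = cfc (id : ℝ → ℝ) A :=
      cfc_congr (fun x hx => Real.mul_self_sqrt (hspos x hx).le)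
    rw [hRdef, ← cfc_mul _ _ A (contOn_spec _ A) (contOn_spec _ A), e, cfc_id ℝ A hsa]
  have hRinv : R⁻¹ = cfc (fun x => (Real.sqrt x)⁻¹) A := by
    rw [hRdef]
    exact cfc_inv_eq hAh (fun x hx => (Real.sqrt_pos.mpr (hspos x hx)).ne')
  have hKeq : matFunCalc (fun l => l * h (1 / l)) A⁻¹ = R⁻¹ * H * R⁻¹ := by
    rw [matFunCalc_eq_cfc _ hAinv.isHermitian, matCfc_comp_inv hA, hRinv, hHdef,
      ← cfc_mul _ _ A (contOn_spec _ A) (contOn_spec _ A),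
      ← cfc_mul _ _ A (contOn_spec _ A) (contOn_spec _ A)]
    apply cfc_congr
    intro x hx
    have hx0 := hspos x hx
    show x⁻¹ * h (1 / x⁻¹) = (Real.sqrt x)⁻¹ * h x * (Real.sqrt x)⁻¹
    rw [one_div, inv_inv]
    have e : (Real.sqrt x)⁻¹ * h x * (Real.sqrt x)⁻¹
        = h x * (Real.sqrt x * Real.sqrt x)⁻¹ := by
      rw [mul_inv]; ring
    rw [e, Real.mul_self_sqrt hx0.le]; ring
  have hSeq : matFunCalc (fun l => 1 / h (1 / l)) A⁻¹ = H⁻¹ := by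
    rw [matFunCalc_eq_cfc _ hAinv.isHermitian, matCfc_comp_inv hA, hHdef,
      cfc_inv_eq hAh (fun x hx => (hpos x (hspos x hx)).ne')]
    apply cfc_congr
    intro x hx
    show 1 / h (1 / x⁻¹) = (h x)⁻¹
    rw [one_div, one_div, inv_inv]
  constructor
  · rw [hHeq, hKeq]
    constructor
    · intro c
      exact shift_cond hA hR hRR c
    · intro c
      have c2 := shift_cond hAinv hR.inv (by rw [← Matrix.mul_inv_rev, hRR]) c
      rw [hAii, Matrix.nonsing_inv_nonsing_inv R hRdet] at c2
      have e : R * (R⁻¹ * H * R⁻¹) * R = H := by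
        calc R * (R⁻¹ * H * R⁻¹) * R = (R * R⁻¹) * H * (R⁻¹ * R) := by noncomm_ring
          _ = H := by
              rw [Matrix.mul_nonsing_inv R hRdet, Matrix.nonsing_inv_mul R hRdet,
                one_mul, Matrix.mul_one]
      rwa [e] at c2
  · rw [hHeq, hSeq]
    constructor
    · exact fun c => dual_cond hA hH c
    · intro c
      have c2 := dual_cond hAinv hH.inv c
      rwa [hAii, hHii] at c2
end

section
/- Let M be a complex Hilbert space, δ > 0 and ε ≥ 0, and let A′, A″ be bounded self-adjoint operators on M with A′ ≥ δ·I, A″ ≥ δ·I, and ‖A′ − A″‖ ≤ ε. Then for every bounded operator T on M and every C ≥ 0 such that T*T ≤ C²·I and T*A′T ≤ C²·A′, one has T*A″T ≤ (1 + 2ε/δ)·C²·A″. -/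
/-- Lemma 3.11: if `A′, A″ ≥ δ·I` are bounded self-adjoint
operators with `‖A′ − A″‖ ≤ ε`, and `T*T ≤ C²·I`, `T*A′T ≤ C²·A′`, then
`T*A″T ≤ (1 + 2ε/δ)·C²·A″` (all inequalities in the Loewner order, expressed via
quadratic forms). -/
theorem perturbation_lemma
    {M : Type*} [NormedAddCommGroup M] [InnerProductSpace ℂ M] [CompleteSpace M]
    (δ ε : ℝ) (hδ : 0 < δ) (hε : 0 ≤ ε)
    (A' A'' : M →L[ℂ] M) (hA' : IsSelfAdjoint A') (hA'' : IsSelfAdjoint A'')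
    (hA'δ : ∀ x : M, δ * ‖x‖ ^ 2 ≤ (inner ℂ (A' x) x : ℂ).re)
    (hA''δ : ∀ x : M, δ * ‖x‖ ^ 2 ≤ (inner ℂ (A'' x) x : ℂ).re)
    (hclose : ‖A' - A''‖ ≤ ε)
    (T : M →L[ℂ] M) (C : ℝ) (hC : 0 ≤ C)
    (hT0 : ∀ x : M, ‖T x‖ ^ 2 ≤ C ^ 2 * ‖x‖ ^ 2)
    (hT1 : ∀ x : M, (inner ℂ (A' (T x)) (T x) : ℂ).re ≤ C ^ 2 * (inner ℂ (A' x) x : ℂ).re) :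
    ∀ x : M, (inner ℂ (A'' (T x)) (T x) : ℂ).re ≤
      (1 + 2 * ε / δ) * C ^ 2 * (inner ℂ (A'' x) x : ℂ).re := by
  -- general bound on the difference of quadratic forms
  have key : ∀ y : M, |(inner ℂ (A'' y) y : ℂ).re - (inner ℂ (A' y) y : ℂ).re| ≤ ε * ‖y‖ ^ 2 := by
    intro y
    have hsplit : (inner ℂ (A'' y) y : ℂ).re - (inner ℂ (A' y) y : ℂ).re
        = (inner ℂ ((A'' - A') y) y : ℂ).re := by
      simp [ContinuousLinearMap.sub_apply, inner_sub_left]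
    rw [hsplit]
    have h1 : |(inner ℂ ((A'' - A') y) y : ℂ).re| ≤ ‖(inner ℂ ((A'' - A') y) y : ℂ)‖ :=
      Complex.abs_re_le_norm _
    have h2 : ‖(inner ℂ ((A'' - A') y) y : ℂ)‖ ≤ ‖(A'' - A') y‖ * ‖y‖ :=
      norm_inner_le_norm _ _
    have h3 : ‖(A'' - A') y‖ ≤ ε * ‖y‖ := by
      calc ‖(A'' - A') y‖ ≤ ‖A'' - A'‖ * ‖y‖ := (A'' - A').le_opNorm y
        _ ≤ ε * ‖y‖ := by
            have hrev : ‖A'' - A'‖ = ‖A' - A''‖ := norm_sub_rev _ _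
            have := norm_nonneg y
            nlinarith
    nlinarith [norm_nonneg y, norm_nonneg ((A'' - A') y)]
  intro x
  have ha : δ * ‖x‖ ^ 2 ≤ (inner ℂ (A'' x) x : ℂ).re := hA''δ x
  have hxa : ‖x‖ ^ 2 ≤ (inner ℂ (A'' x) x : ℂ).re / δ := by
    rw [le_div_iff₀ hδ]; nlinarith
  have hkTx := key (T x)
  have hkx := key x
  have habs1 := abs_le.1 hkTx
  have habs2 := abs_le.1 hkx
  have hT0x := hT0 x
  have hT1x := hT1 x
  have hnx : (0:ℝ) ≤ ‖x‖ ^ 2 := by positivity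
  have hanon : (0:ℝ) ≤ (inner ℂ (A'' x) x : ℂ).re := by nlinarith
  -- chain the inequalities
  have step : (inner ℂ (A'' (T x)) (T x) : ℂ).re
      ≤ C ^ 2 * (inner ℂ (A'' x) x : ℂ).re + 2 * ε * C ^ 2 * ‖x‖ ^ 2 := by
    nlinarith [sq_nonneg C]
  have hfin : 2 * ε * C ^ 2 * ‖x‖ ^ 2 ≤ 2 * ε / δ * C ^ 2 * (inner ℂ (A'' x) x : ℂ).re := by
    have h2ec : (0:ℝ) ≤ 2 * ε * C ^ 2 := by positivity
    have := mul_le_mul_of_nonneg_left hxa h2ec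
    calc 2 * ε * C ^ 2 * ‖x‖ ^ 2 ≤ 2 * ε * C ^ 2 * ((inner ℂ (A'' x) x : ℂ).re / δ) := this
      _ = 2 * ε / δ * C ^ 2 * (inner ℂ (A'' x) x : ℂ).re := by field_simp
  calc (inner ℂ (A'' (T x)) (T x) : ℂ).re
      ≤ C ^ 2 * (inner ℂ (A'' x) x : ℂ).re + 2 * ε * C ^ 2 * ‖x‖ ^ 2 := step
    _ ≤ C ^ 2 * (inner ℂ (A'' x) x : ℂ).re + 2 * ε / δ * C ^ 2 * (inner ℂ (A'' x) x : ℂ).re := by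
        linarith
    _ = (1 + 2 * ε / δ) * C ^ 2 * (inner ℂ (A'' x) x : ℂ).re := by ring
end

section
/- Let S be a nonempty subset of (0,∞) and let (h_k) be a sequence of functions of class P′, i.e., each h_k(λ) = c_k + ∫_{[0,∞)} (1+t)λ/(1+tλ) dρ_k(t) for some constant c_k ≥ 0 and finite positive Borel measure ρ_k on [0,∞). If h_k(λ) converges to a finite limit h(λ) for every λ ∈ S, then there exists a function g of class P′ with g(λ) = h(λ) for all λ ∈ S. -/
open MeasureTheory Filter Set Topology Function

noncomputable def psi (l s : ℝ) : ℝ := l / (1 + s * (l - 1))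
noncomputable def dd (l u : ℝ) : ℝ := l * (l - 1) / (1 + u * (l - 1)) ^ 2

lemma denom_ge {l s : ℝ} (hl : 0 < l) (hs : s ∈ Icc (0:ℝ) 1) :
    min l 1 ≤ 1 + s * (l - 1) := by
  rcases le_or_gt 1 l with h | h
  · have : 0 ≤ s * (l - 1) := mul_nonneg hs.1 (by linarith)
    simp only [min_le_iff]; right; linarith
  · have : s * (1 - l) ≤ 1 * (1 - l) :=
      mul_le_mul_of_nonneg_right hs.2 (by linarith)
    simp only [min_le_iff]; left; nlinarith

lemma denom_pos {l s : ℝ} (hl : 0 < l) (hs : s ∈ Icc (0:ℝ) 1) :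
    0 < 1 + s * (l - 1) :=
  lt_of_lt_of_le (lt_min hl one_pos) (denom_ge hl hs)

lemma psi_le {l s : ℝ} (hl : 0 < l) (hs : s ∈ Icc (0:ℝ) 1) :
    psi l s ≤ max l 1 := by
  have h1 := denom_ge hl hs
  have h2 := denom_pos hl hs
  rw [psi, div_le_iff₀ h2]
  rcases le_or_gt 1 l with h | h
  · have : min l 1 = 1 := min_eq_right h
    have : max l 1 = l := max_eq_left h
    rw [this]; nlinarith [denom_ge hl hs, min_eq_right h]
  · have hmin : min l 1 = l := min_eq_left h.le
    have hmax : max l 1 = 1 := max_eq_right h.le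
    rw [hmax]; nlinarith [denom_ge hl hs]

lemma psi_ge {l s : ℝ} (hl : 0 < l) (hs : s ∈ Icc (0:ℝ) 1) :
    min l 1 ≤ psi l s := by
  have h2 := denom_pos hl hs
  rw [psi, le_div_iff₀ h2]
  rcases le_or_gt 1 l with h | h
  · have hmin : min l 1 = 1 := min_eq_right h
    rw [hmin]; nlinarith [hs.1, hs.2]
  · have hmin : min l 1 = l := min_eq_left h.le
    rw [hmin]
    nlinarith [mul_nonneg hs.1 (show (0:ℝ) ≤ 1 - l by linarith), hl.le,
      mul_nonneg hl.le (mul_nonneg hs.1 (show (0:ℝ) ≤ 1 - l by linarith))]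

lemma psi_abs_le {l s : ℝ} (hl : 0 < l) (hs : s ∈ Icc (0:ℝ) 1) :
    |psi l s| ≤ max l 1 := by
  rw [abs_le]
  constructor
  · have := psi_ge hl hs
    have : (0:ℝ) ≤ psi l s := le_trans (le_min hl.le zero_le_one) this
    have : (0:ℝ) ≤ max l 1 := le_max_of_le_right zero_le_one
    linarith [psi_ge hl hs, lt_min hl one_pos]
  · exact psi_le hl hs

lemma psi_one {l : ℝ} (hl : 0 < l) : psi l 1 = 1 := by
  rw [psi]; rw [show (1:ℝ) + 1 * (l - 1) = l by ring]; exact div_self hl.ne'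

lemma psi_measurable (l : ℝ) : Measurable (psi l) := by
  unfold psi
  exact measurable_const.div ((measurable_const.add
    (measurable_id.mul measurable_const)))

noncomputable def KK (l : ℝ) : ℝ := |l * (l - 1)| / (min l 1) ^ 2

lemma dd_abs_le {l u : ℝ} (hl : 0 < l) (hu : u ∈ Icc (0:ℝ) 1) :
    |dd l u| ≤ KK l := by
  have h1 := denom_ge hl hu
  have h2 := denom_pos hl hu
  have hm : 0 < min l 1 := lt_min hl one_pos
  rw [dd, KK, abs_div, abs_of_pos (pow_pos h2 2)]
  apply div_le_div_of_nonneg_left (abs_nonneg _) (pow_pos hm 2)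
  · exact pow_le_pow_left₀ hm.le h1 2

lemma dd_measurable (l : ℝ) : Measurable (dd l) := by
  unfold dd
  exact measurable_const.div (((measurable_const.add
    (measurable_id.mul measurable_const))).pow measurable_const)

lemma hasDerivAt_neg_psi {l u : ℝ} (hl : 0 < l) (hu : u ∈ Icc (0:ℝ) 1) :
    HasDerivAt (fun x => -psi l x) (dd l u) u := by
  have h2 := denom_pos hl hu
  have : HasDerivAt (fun x : ℝ => 1 + x * (l - 1)) (l - 1) u := by
    simpa using ((hasDerivAt_id u).mul_const (l - 1)).const_add 1
  have hd := ((hasDerivAt_const u l).div this h2.ne').neg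
  have heq : dd l u = -((0 * (1 + u * (l - 1)) - l * (l - 1)) / (1 + u * (l - 1)) ^ 2) := by
    rw [dd]; field_simp; ring
  rw [heq]
  exact hd

lemma integral_dd {l s : ℝ} (hl : 0 < l) (hs : s ∈ Icc (0:ℝ) 1) :
    ∫ u in s..1, dd l u = psi l s - 1 := by
  have hsub : uIcc s 1 ⊆ Icc (0:ℝ) 1 := by
    rw [uIcc_of_le hs.2]
    exact Icc_subset_Icc hs.1 le_rfl
  have hcont : ContinuousOn (dd l) (uIcc s 1) := by
    apply ContinuousOn.div
    · exact continuousOn_const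
    · exact (continuousOn_const.add (continuousOn_id.mul continuousOn_const)).pow 2
    · intro x hx
      exact (pow_pos (denom_pos hl (hsub hx)) 2).ne'
  have := intervalIntegral.integral_eq_sub_of_hasDerivAt
    (f := fun x => -psi l x) (f' := dd l)
    (fun x hx => hasDerivAt_neg_psi hl (hsub hx))
    (hcont.intervalIntegrable)
  rw [this]
  rw [psi_one hl]
  ring

lemma derivfun_aux {l u : ℝ} (hl : 0 < l) (hu : u ∈ Icc (0:ℝ) 1) : True := trivial

/-- Integration by parts for measures supported on `[0,1]`. -/
lemma partsA (l : ℝ) (hl : 0 < l) (μ : Measure ℝ) [IsFiniteMeasure μ]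
    (hsupp : μ (Icc (0:ℝ) 1)ᶜ = 0) :
    ∫ s, psi l s ∂μ =
      (μ univ).toReal + ∫ u in Ioc (0:ℝ) 1, dd l u * (μ (Iio u)).toReal := by
  have haemem : ∀ᵐ s ∂μ, s ∈ Icc (0:ℝ) 1 := by
    rw [ae_iff]
    exact hsupp
  have hres : μ.restrict (Icc (0:ℝ) 1) = μ :=
    Measure.restrict_eq_self_of_ae_mem haemem
  -- the double integral function
  set G : ℝ → ℝ → ℝ := fun s u => if s < u then dd l u else 0 with hG
  -- Step 1: reduce to set integral over Icc 0 1
  have step1 : ∫ s, psi l s ∂μ = ∫ s in Icc (0:ℝ) 1, psi l s ∂μ := by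
    rw [hres]
  -- Step 2: pointwise identity
  have step2 : ∀ s ∈ Icc (0:ℝ) 1,
      psi l s = 1 + ∫ u in Ioc (0:ℝ) 1, G s u := by
    intro s hs
    have : ∫ u in Ioc (0:ℝ) 1, G s u = ∫ u in Ioc s 1, dd l u := by
      rw [hG]
      simp only
      rw [← integral_indicator measurableSet_Ioc, ← integral_indicator measurableSet_Ioc]
      congr 1
      ext u
      simp only [indicator, mem_Ioc, mem_Ioc]
      by_cases h1 : s < u
      · by_cases h2 : u ≤ 1
        · by_cases h3 : 0 < u
          · simp [h1, h2, h3]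
          · exact absurd (lt_of_le_of_lt hs.1 h1) h3
        · simp [h1, h2]
      · simp [h1]
    rw [this, ← intervalIntegral.integral_of_le hs.2, integral_dd hl hs]
    ring
  -- integrability of psi
  have hψint : Integrable (psi l) μ := by
    refine Integrable.mono' (integrable_const (max l 1))
      ((psi_measurable l).aestronglyMeasurable) ?_
    filter_upwards [haemem] with s hs using psi_abs_le hl hs
  have hIccnull : ∀ A : Set ℝ, μ (A ∩ Icc (0:ℝ) 1) = μ A := by
    intro A
    refine le_antisymm (measure_mono inter_subset_left) ?_
    calc μ A = μ ((A ∩ Icc (0:ℝ) 1) ∪ (A ∩ (Icc (0:ℝ) 1)ᶜ)) := by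
          rw [Set.inter_union_compl]
      _ ≤ μ (A ∩ Icc (0:ℝ) 1) + μ (A ∩ (Icc (0:ℝ) 1)ᶜ) := measure_union_le _ _
      _ ≤ μ (A ∩ Icc (0:ℝ) 1) + 0 := by
          gcongr
          exact le_trans (measure_mono inter_subset_right) hsupp.le
      _ = μ (A ∩ Icc (0:ℝ) 1) := by rw [add_zero]
  -- Fubini step
  have hGmeas : Measurable (Function.uncurry G) := by
    have : Function.uncurry G =
        {p : ℝ × ℝ | p.1 < p.2}.indicator (fun p => dd l p.2) := by
      ext p
      simp only [Function.uncurry, hG, indicator, mem_setOf_eq]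
    rw [this]
    exact ((dd_measurable l).comp measurable_snd).indicator
      (measurableSet_lt measurable_fst measurable_snd)
  haveI : IsFiniteMeasure (volume.restrict (Ioc (0:ℝ) 1)) :=
    ⟨by simp [Measure.restrict_apply, lt_top_iff_ne_top]⟩
  have hGint : Integrable (Function.uncurry G)
      ((μ.restrict (Icc (0:ℝ) 1)).prod (volume.restrict (Ioc (0:ℝ) 1))) := by
    refine Integrable.mono' (integrable_const (KK l)) hGmeas.aestronglyMeasurable ?_
    rw [Measure.prod_restrict]
    filter_upwards [ae_restrict_mem (measurableSet_Icc.prod measurableSet_Ioc)]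
      with p hp
    obtain ⟨hp1, hp2⟩ := hp
    rw [Function.uncurry, hG]
    simp only
    by_cases h : p.1 < p.2
    · simpa [h] using dd_abs_le hl (Ioc_subset_Icc_self hp2)
    · simp only [h, if_false, norm_zero]
      exact le_trans (abs_nonneg (dd l p.2)) (dd_abs_le hl (Ioc_subset_Icc_self hp2))
  have swap : ∫ s in Icc (0:ℝ) 1, (∫ u in Ioc (0:ℝ) 1, G s u) ∂μ
      = ∫ u in Ioc (0:ℝ) 1, (∫ s in Icc (0:ℝ) 1, G s u ∂μ) := by
    exact integral_integral_swap hGint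
  -- inner evaluation
  have inner : ∀ u : ℝ, ∫ s in Icc (0:ℝ) 1, G s u ∂μ = dd l u * (μ (Iio u)).toReal := by
    intro u
    have hfun : (fun s => G s u) = (Iio u).indicator (fun _ => dd l u) := by
      ext s
      simp [hG, indicator, mem_Iio]
    rw [show (∫ s in Icc (0:ℝ) 1, G s u ∂μ)
        = ∫ s in Icc (0:ℝ) 1, (Iio u).indicator (fun _ => dd l u) s ∂μ by
      rw [← hfun]]
    rw [integral_indicator measurableSet_Iio, Measure.restrict_restrict measurableSet_Iio,
      setIntegral_const, measureReal_def, hIccnull (Iio u)]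
    rw [smul_eq_mul, mul_comm]
  -- assemble
  have hsplit : ∫ s in Icc (0:ℝ) 1, psi l s ∂μ
      = (μ univ).toReal + ∫ s in Icc (0:ℝ) 1, (psi l s - 1) ∂μ := by
    have h1 : Integrable (fun s => psi l s - 1) (μ.restrict (Icc (0:ℝ) 1)) :=
      hψint.restrict.sub (integrable_const 1)
    have : ∫ s in Icc (0:ℝ) 1, psi l s ∂μ
        = ∫ s in Icc (0:ℝ) 1, (1 + (psi l s - 1)) ∂μ := by
      congr 1; ext s; ring
    rw [this, integral_add (integrable_const 1) h1, setIntegral_const,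
      smul_eq_mul, mul_one, measureReal_def,
      show μ (Icc (0:ℝ) 1) = μ univ from by rw [← hIccnull univ, univ_inter]]
  rw [step1, hsplit]
  congr 1
  have e1 : ∫ s in Icc (0:ℝ) 1, (psi l s - 1) ∂μ
      = ∫ s in Icc (0:ℝ) 1, (∫ u in Ioc (0:ℝ) 1, G s u) ∂μ := by
    apply setIntegral_congr_fun measurableSet_Icc
    intro s hs
    simp only
    rw [step2 s hs]
    ring
  rw [e1, swap]
  apply setIntegral_congr_fun measurableSet_Ioc
  intro u _
  exact inner u

noncomputable def emap : ℝ → ℝ := fun t => if 0 ≤ t then t / (1 + t) else 0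

lemma emap_measurable : Measurable emap := by
  apply Measurable.ite measurableSet_Ici
  · exact measurable_id.div (measurable_const.add measurable_id)
  · exact measurable_const

lemma emap_mem (t : ℝ) : emap t ∈ Ico (0:ℝ) 1 := by
  rw [emap]
  by_cases ht : 0 ≤ t
  · rw [if_pos ht]
    have h1 : (0:ℝ) < 1 + t := by linarith
    constructor
    · positivity
    · rw [div_lt_one h1]; linarith
  · rw [if_neg ht]; exact ⟨le_rfl, one_pos⟩

lemma integrable_psi_of_supp {l : ℝ} (hl : 0 < l) (μ : Measure ℝ) [IsFiniteMeasure μ]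
    (hsupp : μ (Icc (0:ℝ) 1)ᶜ = 0) : Integrable (psi l) μ := by
  refine Integrable.mono' (integrable_const (max l 1))
    ((psi_measurable l).aestronglyMeasurable) ?_
  have haemem : ∀ᵐ s ∂μ, s ∈ Icc (0:ℝ) 1 := by rw [ae_iff]; exact hsupp
  filter_upwards [haemem] with s hs using psi_abs_le hl hs

lemma rep_to_measure (c : ℝ) (hc : 0 ≤ c) (ρ : Measure ℝ) [IsFiniteMeasure ρ] :
    ∃ μ : Measure ℝ, IsFiniteMeasure μ ∧ μ (Icc (0:ℝ) 1)ᶜ = 0 ∧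
      ∀ l : ℝ, 0 < l →
        c + ∫ t in Ici (0:ℝ), ((1 + t) * l) / (1 + t * l) ∂ρ = ∫ s, psi l s ∂μ := by
  set ν : Measure ℝ := (ρ.restrict (Ici 0)).map emap with hν
  set μ : Measure ℝ := ν + (ENNReal.ofReal c) • Measure.dirac 1 with hμ
  have hνuniv : ν univ = ρ.restrict (Ici 0) univ := by
    rw [hν, Measure.map_apply emap_measurable MeasurableSet.univ, preimage_univ]
  have hfin : IsFiniteMeasure μ := by
    constructor
    rw [hμ]
    simp only [Measure.add_apply, Measure.smul_apply, smul_eq_mul]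
    rw [hνuniv]
    exact ENNReal.add_lt_top.2 ⟨measure_lt_top _ _,
      ENNReal.mul_lt_top ENNReal.ofReal_lt_top (by simp)⟩
  refine ⟨μ, hfin, ?_, ?_⟩
  · rw [hμ]
    simp only [Measure.add_apply, Measure.smul_apply, smul_eq_mul]
    have h1 : ν (Icc (0:ℝ) 1)ᶜ = 0 := by
      rw [hν, Measure.map_apply emap_measurable measurableSet_Icc.compl]
      have : emap ⁻¹' (Icc (0:ℝ) 1)ᶜ = ∅ := by
        rw [eq_empty_iff_forall_notMem]
        intro t ht
        exact ht (Ico_subset_Icc_self (emap_mem t))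
      rw [this, measure_empty]
    have h2 : Measure.dirac (1:ℝ) (Icc (0:ℝ) 1)ᶜ = 0 := by
      rw [Measure.dirac_apply' _ measurableSet_Icc.compl]
      simp [indicator]
    rw [h1, h2, mul_zero, add_zero]
  · intro l hl
    have hsm : AEStronglyMeasurable (psi l) ν :=
      (psi_measurable l).aestronglyMeasurable
    have hcomp : Integrable (psi l ∘ emap) (ρ.restrict (Ici 0)) := by
      refine Integrable.mono' (integrable_const (max l 1))
        ((psi_measurable l).comp emap_measurable).aestronglyMeasurable ?_
      filter_upwards with t
      exact psi_abs_le hl (Ico_subset_Icc_self (emap_mem t))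
    have int1 : Integrable (psi l) ν :=
      (integrable_map_measure hsm emap_measurable.aemeasurable).2 hcomp
    have int2 : Integrable (psi l) ((ENNReal.ofReal c) • Measure.dirac 1) := by
      refine Integrable.smul_measure ?_ ENNReal.ofReal_ne_top
      refine Integrable.mono' (integrable_const (max l 1))
        ((psi_measurable l).aestronglyMeasurable) ?_
      have hae : ∀ᵐ x ∂(Measure.dirac (1:ℝ)), ‖psi l x‖ ≤ max l 1 := by
        rw [ae_dirac_eq]
        simp only [eventually_pure]
        exact psi_abs_le hl ⟨zero_le_one, le_rfl⟩
      exact hae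
    have e2 : ∫ s, psi l s ∂((ENNReal.ofReal c) • Measure.dirac 1) = c := by
      rw [integral_smul_measure, integral_dirac, psi_one hl,
        ENNReal.toReal_ofReal hc, smul_eq_mul, mul_one]
    have e1 : ∫ s, psi l s ∂ν = ∫ t in Ici (0:ℝ), ((1 + t) * l) / (1 + t * l) ∂ρ := by
      rw [hν, integral_map emap_measurable.aemeasurable hsm]
      apply setIntegral_congr_fun measurableSet_Ici
      intro t ht
      simp only [emap, if_pos (mem_Ici.1 ht)]
      have h0t : (0:ℝ) ≤ t := mem_Ici.1 ht
      have h1t : (0:ℝ) < 1 + t := by linarith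
      have hX : 1 + (t/(1+t))*(l-1) = (1+t*l)/(1+t) := by field_simp; ring
      rw [psi, hX, div_div_eq_mul_div]
      ring
    rw [hμ, integral_add_measure int1 int2, e1, e2]
    ring

/-- A function is of class `P'` (positive Pick functions regular on `(0,∞)`) if
`h(λ) = c + ∫_{[0,∞)} (1+t)λ/(1+tλ) dρ(t)` on `(0,∞)` for some constant `c ≥ 0`
and finite positive Borel measure `ρ` on `[0,∞)`. -/
def IsPickPos (h : ℝ → ℝ) : Prop :=
  ∃ c : ℝ, 0 ≤ c ∧ ∃ ρ : Measure ℝ, IsFiniteMeasure ρ ∧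
    ∀ l : ℝ, 0 < l →
      h l = c + ∫ t in Set.Ici (0 : ℝ), ((1 + t) * l) / (1 + t * l) ∂ρ

lemma measure_to_rep (μ : Measure ℝ) [IsFiniteMeasure μ]
    (hsupp : μ (Icc (0:ℝ) 1)ᶜ = 0) :
    ∃ g : ℝ → ℝ, IsPickPos g ∧ ∀ l : ℝ, 0 < l → g l = ∫ s, psi l s ∂μ := by
  have haemem : ∀ᵐ s ∂μ, s ∈ Icc (0:ℝ) 1 := by rw [ae_iff]; exact hsupp
  set j : ℝ → ℝ := fun s => if s < 1 then s / (1 - s) else 0 with hj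
  have hjm : Measurable j := by
    apply Measurable.ite measurableSet_Iio
    · exact measurable_id.div (measurable_const.sub measurable_id)
    · exact measurable_const
  set ρ : Measure ℝ := (μ.restrict (Ico 0 1)).map j with hρ
  have hρfin : IsFiniteMeasure ρ := by
    constructor
    rw [hρ, Measure.map_apply hjm MeasurableSet.univ, preimage_univ,
      Measure.restrict_apply_univ]
    exact measure_lt_top μ _
  set c : ℝ := (μ {1}).toReal with hc
  refine ⟨fun l => c + ∫ t in Ici (0:ℝ), ((1 + t) * l) / (1 + t * l) ∂ρ,
    ⟨c, ENNReal.toReal_nonneg, ρ, hρfin, fun l hl => rfl⟩, ?_⟩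
  intro l hl
  simp only
  have hpsiint := integrable_psi_of_supp hl μ hsupp
  -- restrict of ρ to Ici 0 is ρ
  have hρsupp : ∀ᵐ t ∂ρ, t ∈ Ici (0:ℝ) := by
    rw [ae_iff]
    have : {t : ℝ | ¬ t ∈ Ici (0:ℝ)} = Iio 0 := by
      ext t; simp [mem_Iio]
    rw [this, hρ, Measure.map_apply hjm measurableSet_Iio,
      Measure.restrict_apply (hjm measurableSet_Iio)]
    have : j ⁻¹' (Iio 0) ∩ Ico 0 1 = ∅ := by
      rw [eq_empty_iff_forall_notMem]
      rintro s ⟨hs1, hs2⟩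
      rw [mem_preimage, mem_Iio, hj] at hs1
      simp only [if_pos hs2.2] at hs1
      have h1s : (0:ℝ) < 1 - s := by linarith [hs2.2]
      have : (0:ℝ) ≤ s / (1 - s) := div_nonneg hs2.1 h1s.le
      linarith
    rw [this, measure_empty]
  have hresρ : ρ.restrict (Ici (0:ℝ)) = ρ := Measure.restrict_eq_self_of_ae_mem hρsupp
  have fmeas : Measurable (fun t : ℝ => ((1 + t) * l) / (1 + t * l)) :=
    ((measurable_const.add measurable_id).mul measurable_const).div
      (measurable_const.add (measurable_id.mul measurable_const))
  have e1 : ∫ t in Ici (0:ℝ), ((1 + t) * l) / (1 + t * l) ∂ρ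
      = ∫ s in Ico (0:ℝ) 1, psi l s ∂μ := by
    rw [show (∫ t in Ici (0:ℝ), ((1 + t) * l) / (1 + t * l) ∂ρ)
        = ∫ t, ((1 + t) * l) / (1 + t * l) ∂ρ from by rw [hresρ]]
    rw [hρ, integral_map hjm.aemeasurable fmeas.aestronglyMeasurable]
    apply setIntegral_congr_fun measurableSet_Ico
    intro s hs
    simp only [hj, if_pos hs.2]
    have h1s : (0:ℝ) < 1 - s := by linarith [hs.2]
    have hden : (0:ℝ) < 1 + s * (l - 1) := denom_pos hl ⟨hs.1, hs.2.le⟩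
    have hB : 1 + (s/(1-s))*l = (1+s*(l-1))/(1-s) := by field_simp; ring
    rw [psi, div_eq_div_iff (by rw [show 1 + s/(1-s)*l = (1+s*(l-1))/(1-s) from hB]; positivity)
      hden.ne']
    have hA : 1 + s/(1-s) = 1/(1-s) := by field_simp; ring
    rw [hA, hB]
    field_simp
  have e2 : c = ∫ s in ({1} : Set ℝ), psi l s ∂μ := by
    rw [Measure.restrict_singleton, integral_smul_measure, integral_dirac,
      psi_one hl, smul_eq_mul, mul_one, hc]
  rw [e1, e2, add_comm, ← setIntegral_union (by simp) (measurableSet_singleton 1)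
    hpsiint.integrableOn hpsiint.integrableOn]
  rw [Set.Ico_union_right zero_le_one]
  rw [show μ.restrict (Icc (0:ℝ) 1) = μ from Measure.restrict_eq_self_of_ae_mem haemem]

lemma KK_nonneg (l : ℝ) : 0 ≤ KK l := by
  rw [KK]; positivity


/-- Lemma 3.10 (i): the class `P'|S` is closed under pointwise
convergence: if a sequence of `P'` functions converges pointwise on `S ⊆ (0,∞)`
to `h`, then `h` agrees on `S` with some `P'` function. -/
theorem pick_class_closed_under_pointwise_convergence
    (S : Set ℝ) (hS : S.Nonempty) (hS' : S ⊆ Set.Ioi (0 : ℝ))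
    (hk : ℕ → ℝ → ℝ) (hhk : ∀ k, IsPickPos (hk k))
    (h : ℝ → ℝ)
    (hconv : ∀ l ∈ S, Tendsto (fun k => hk k l) atTop (nhds (h l))) :
    ∃ g : ℝ → ℝ, IsPickPos g ∧ ∀ l ∈ S, g l = h l := by

  classical
  choose c hc ρ hρ hrep using hhk
  have hμex : ∀ k, ∃ μ : Measure ℝ, IsFiniteMeasure μ ∧ μ (Icc (0:ℝ) 1)ᶜ = 0 ∧
      ∀ l : ℝ, 0 < l → hk k l = ∫ s, psi l s ∂μ := by
    intro k
    haveI := hρ k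
    obtain ⟨μ, h1, h2, h3⟩ := rep_to_measure (c k) (hc k) (ρ k)
    exact ⟨μ, h1, h2, fun l hl => by rw [hrep k l hl, h3 l hl]⟩
  choose μ hμfin hμsupp hμrep using hμex
  obtain ⟨l0, hl0S⟩ := hS
  have hl0 : 0 < l0 := hS' hl0S
  set α : ℝ := min l0 1 with hα
  have hαpos : 0 < α := lt_min hl0 one_pos
  obtain ⟨M, hM⟩ : BddAbove (Set.range fun k => hk k l0) :=
    (hconv l0 hl0S).bddAbove_range
  have hMbd : ∀ k, hk k l0 ≤ M := fun k => hM (Set.mem_range_self k)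
  set C : ℝ := M / α with hC
  have haemem : ∀ k, ∀ᵐ s ∂(μ k), s ∈ Icc (0:ℝ) 1 := fun k => by
    rw [ae_iff]; exact hμsupp k
  have hmassk : ∀ k, α * ((μ k) univ).toReal ≤ hk k l0 := by
    intro k
    haveI := hμfin k
    rw [hμrep k l0 hl0]
    have : ∫ _, α ∂(μ k) ≤ ∫ s, psi l0 s ∂(μ k) := by
      apply integral_mono_ae (integrable_const α)
        (integrable_psi_of_supp hl0 (μ k) (hμsupp k))
      filter_upwards [haemem k] with s hs using psi_ge hl0 hs
    simpa [integral_const, smul_eq_mul, mul_comm, measureReal_def] using this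
  have hmassC : ∀ k, ((μ k) univ).toReal ≤ C := by
    intro k
    rw [hC, le_div_iff₀ hαpos]
    calc ((μ k) univ).toReal * α = α * ((μ k) univ).toReal := mul_comm _ _
      _ ≤ hk k l0 := hmassk k
      _ ≤ M := hMbd k
  -- CDFs
  set F : ℕ → ℝ → ℝ := fun k x => ((μ k) (Iio x)).toReal with hF
  have hFmono : ∀ k, Monotone (F k) := by
    intro k x y hxy
    haveI := hμfin k
    exact ENNReal.toReal_mono (measure_ne_top _ _) (measure_mono (Iio_subset_Iio hxy))
  have hFrange : ∀ k x, F k x ∈ Icc 0 C := by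
    intro k x
    haveI := hμfin k
    refine ⟨ENNReal.toReal_nonneg, le_trans ?_ (hmassC k)⟩
    exact ENNReal.toReal_mono (measure_ne_top _ _) (measure_mono (subset_univ _))
  have hFzero : ∀ k (x : ℝ), x ≤ 0 → F k x = 0 := by
    intro k x hx
    have : (μ k) (Iio x) = 0 := by
      apply measure_mono_null _ (hμsupp k)
      intro y hy
      simp only [mem_compl_iff, mem_Icc, not_and_or, not_le]
      left; exact lt_of_lt_of_le hy hx
    simp [hF, this]
  have hFtotal : ∀ k (x : ℝ), 1 < x → (μ k) (Iio x) = (μ k) univ := by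
    intro k x hx
    refine le_antisymm (measure_mono (subset_univ _)) ?_
    calc (μ k) univ = (μ k) (Iio x ∪ (Iio x)ᶜ) := by rw [union_compl_self]
      _ ≤ (μ k) (Iio x) + (μ k) (Iio x)ᶜ := measure_union_le _ _
      _ ≤ (μ k) (Iio x) + 0 := by
          refine add_le_add le_rfl (le_of_eq ?_)
          apply measure_mono_null _ (hμsupp k)
          intro y hy
          simp only [mem_compl_iff, mem_Iio, not_lt] at hy
          simp only [mem_compl_iff, mem_Icc, not_and_or, not_le]
          right; exact lt_of_lt_of_le hx hy
      _ = (μ k) (Iio x) := add_zero _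
  -- subsequence extraction via compactness of ℚ → Icc 0 C
  set X : ℕ → ℚ → ℝ := fun k q => F k (q:ℝ) with hX
  have hXmem : ∀ k, X k ∈ Set.pi univ (fun _ : ℚ => Icc (0:ℝ) C) :=
    fun k q _ => hFrange k q
  obtain ⟨f, hfmem, φ, hφmono, hφtend⟩ :=
    (isCompact_univ_pi (fun _ : ℚ => isCompact_Icc)).tendsto_subseq hXmem
  have hft : ∀ q : ℚ, Tendsto (fun n => F (φ n) (q:ℝ)) atTop (𝓝 (f q)) :=
    fun q => tendsto_pi_nhds.1 hφtend q
  have hf0 : ∀ q : ℚ, (0:ℝ) ≤ f q := fun q => (hfmem q (mem_univ q)).1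
  have hfmono : ∀ q r : ℚ, q ≤ r → f q ≤ f r := by
    intro q r hqr
    exact le_of_tendsto_of_tendsto' (hft q) (hft r)
      (fun n => hFmono (φ n) (by exact_mod_cast hqr))
  have hfneg : ∀ q : ℚ, q ≤ 0 → f q = 0 := by
    intro q hq
    refine tendsto_nhds_unique (hft q) ?_
    have : (fun n => F (φ n) (q:ℝ)) = fun _ => 0 :=
      funext fun n => hFzero _ _ (by exact_mod_cast hq)
    rw [this]; exact tendsto_const_nhds
  have hftail : ∀ q : ℚ, 1 < (q:ℝ) → f q = f 2 := by
    intro q hq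
    refine tendsto_nhds_unique (hft q) ?_
    have : (fun n => F (φ n) (q:ℝ)) = fun n => F (φ n) ((2:ℚ):ℝ) := by
      funext n
      simp only [hF]
      rw [hFtotal _ _ hq, hFtotal _ _ (by norm_num)]
    rw [this]
    exact hft 2
  -- the limit monotone function
  set Flim : ℝ → ℝ := fun x => sInf ((fun q : ℚ => f q) '' {q : ℚ | x < (q:ℝ)}) with hFlim
  have hne : ∀ x : ℝ, ((fun q : ℚ => f q) '' {q : ℚ | x < (q:ℝ)}).Nonempty := by
    intro x
    obtain ⟨q, hq⟩ := exists_rat_gt x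
    exact ⟨f q, ⟨q, hq, rfl⟩⟩
  have hbdd0 : ∀ x : ℝ, BddBelow ((fun q : ℚ => f q) '' {q : ℚ | x < (q:ℝ)}) := by
    intro x
    refine ⟨0, ?_⟩
    rintro y ⟨q, _, rfl⟩
    exact hf0 q
  have hFlim_le : ∀ (x : ℝ) (q : ℚ), x < (q:ℝ) → Flim x ≤ f q :=
    fun x q hq => csInf_le (hbdd0 x) ⟨q, hq, rfl⟩
  have hle_Flim : ∀ (q : ℚ) (x : ℝ), (q:ℝ) ≤ x → f q ≤ Flim x := by
    intro q x hq
    apply le_csInf (hne x)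
    rintro y ⟨r, hr, rfl⟩
    exact hfmono q r (by exact_mod_cast le_of_lt (lt_of_le_of_lt hq hr))
  have hFlim_mono : Monotone Flim := by
    intro x y hxy
    apply le_csInf (hne y)
    rintro z ⟨q, hq, rfl⟩
    exact hFlim_le x q (lt_of_le_of_lt hxy hq)
  have hFlim_nonneg : ∀ x, 0 ≤ Flim x := fun x =>
    le_csInf (hne x) (by rintro y ⟨q, _, rfl⟩; exact hf0 q)
  have hFlim_rc : ∀ x, ContinuousWithinAt Flim (Ici x) x := by
    intro x
    rw [ContinuousWithinAt, Metric.tendsto_nhdsWithin_nhds]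
    intro ε hε
    obtain ⟨z, ⟨q, hq, rfl⟩, hzε⟩ := exists_lt_of_csInf_lt (hne x)
      (show Flim x < Flim x + ε by linarith)
    simp only [mem_setOf_eq] at hq
    refine ⟨(q:ℝ) - x, by linarith, ?_⟩
    intro y hy hdist
    rw [Real.dist_eq, abs_lt] at hdist
    rw [Real.dist_eq, abs_lt]
    have hyq : y < (q:ℝ) := by linarith [hdist.2]
    have h1 : Flim y ≤ f q := hFlim_le y q hyq
    have h2 : Flim x ≤ Flim y := hFlim_mono (mem_Ici.1 hy)
    constructor <;> linarith
  set sF : StieltjesFunction ℝ := ⟨Flim, hFlim_mono, hFlim_rc⟩ with hsF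
  have hFlim_neg : ∀ x : ℝ, x < 0 → Flim x = 0 := by
    intro x hx
    obtain ⟨q, hq1, hq2⟩ := exists_rat_btwn hx
    refine le_antisymm ?_ (hFlim_nonneg x)
    calc Flim x ≤ f q := hFlim_le x q hq1
      _ = 0 := hfneg q (by exact_mod_cast hq2.le)
  have hFlim_tail : ∀ x : ℝ, 1 ≤ x → Flim x = f 2 := by
    intro x hx
    refine le_antisymm ?_ ?_
    · obtain ⟨q, hq⟩ := exists_rat_gt x
      calc Flim x ≤ f q := hFlim_le x q hq
        _ = f 2 := hftail q (lt_of_le_of_lt hx hq)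
    · apply le_csInf (hne x)
      rintro y ⟨q, hq, rfl⟩
      exact le_of_eq (hftail q (lt_of_le_of_lt hx hq)).symm
  have htb : Tendsto Flim atBot (𝓝 0) := by
    apply Tendsto.congr' _ (tendsto_const_nhds (α := ℝ) (f := atBot))
    filter_upwards [Iio_mem_atBot (0:ℝ)] with x hx
    exact (hFlim_neg x hx).symm
  have htt : Tendsto Flim atTop (𝓝 (f 2)) := by
    apply Tendsto.congr' _ (tendsto_const_nhds (α := ℝ) (f := atTop))
    filter_upwards [Ici_mem_atTop (1:ℝ)] with x hx
    exact (hFlim_tail x hx).symm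
  have hsFcoe : ⇑sF = Flim := rfl
  set ν := sF.measure with hν
  haveI hνfin : IsFiniteMeasure ν := by
    constructor
    rw [hν, sF.measure_univ (l := 0) (u := f 2) (by rw [hsFcoe]; exact htb)
      (by rw [hsFcoe]; exact htt)]
    exact ENNReal.ofReal_lt_top
  have hνuniv' : ν univ = ENNReal.ofReal (f 2) := by
    rw [hν, sF.measure_univ (l := 0) (u := f 2) (by rw [hsFcoe]; exact htb)
      (by rw [hsFcoe]; exact htt), sub_zero]
  have hνuniv : (ν univ).toReal = f 2 := by
    rw [hν, sF.measure_univ (l := 0) (u := f 2) (by rw [hsFcoe]; exact htb)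
      (by rw [hsFcoe]; exact htt), sub_zero, ENNReal.toReal_ofReal (hf0 2)]
  have hνIic : ∀ x : ℝ, ν (Iic x) = ENNReal.ofReal (Flim x) := by
    intro x
    rw [hν, sF.measure_Iic (l := 0) (by rw [hsFcoe]; exact htb), hsFcoe, sub_zero]
  have hνsupp : ν (Icc (0:ℝ) 1)ᶜ = 0 := by
    rw [show (Icc (0:ℝ) 1)ᶜ = Iio 0 ∪ Ioi 1 from by
      ext x
      simp only [mem_compl_iff, mem_Icc, not_and_or, not_le, mem_union, mem_Iio, mem_Ioi]]
    apply measure_union_null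
    · have hcover : Iio (0:ℝ) ⊆ ⋃ n : ℕ, Iic (-(1/((n:ℝ)+1))) := by
        intro x hx
        obtain ⟨n, hn⟩ := exists_nat_one_div_lt (show (0:ℝ) < -x by
          simpa using (mem_Iio.1 hx))
        exact mem_iUnion.2 ⟨n, by simp only [mem_Iic]; linarith⟩
      refine measure_mono_null hcover (measure_iUnion_null fun n => ?_)
      have hneg : -(1/((n:ℝ)+1)) < 0 := by
        have : (0:ℝ) < 1/((n:ℝ)+1) := by positivity
        linarith
      rw [hνIic, hFlim_neg _ hneg]
      simp
    · rw [← compl_Iic, measure_compl measurableSet_Iic (measure_ne_top _ _), hνIic,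
        hFlim_tail 1 le_rfl, hνuniv', tsub_self]
    -- pointwise convergence of CDFs at continuity points
  have hpt : ∀ u : ℝ, ContinuousAt Flim u →
      Tendsto (fun n => F (φ n) u) atTop (𝓝 (Flim u)) := by
    intro u hu
    rw [Metric.tendsto_atTop]
    intro ε hε
    obtain ⟨z, ⟨q2, hq2, rfl⟩, hz2⟩ := exists_lt_of_csInf_lt (hne u)
      (show Flim u < Flim u + ε/4 by linarith)
    simp only [mem_setOf_eq] at hq2
    obtain ⟨δ, hδ, hδprop⟩ := Metric.continuousAt_iff.1 hu (ε/4) (by linarith)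
    obtain ⟨q1, hq11, hq12⟩ := exists_rat_btwn (show u - δ/2 < u by linarith)
    have hd : dist (u - δ/2) u < δ := by
      rw [Real.dist_eq, abs_lt]
      constructor <;> linarith
    have hF12 := hδprop hd
    rw [Real.dist_eq, abs_lt] at hF12
    have hFq1 : Flim u - ε/4 < f q1 := by
      have h1 : Flim (u - δ/2) ≤ f q1 := hFlim_le _ _ hq11
      linarith [hF12.1]
    have hfq1le : f q1 ≤ Flim u := hle_Flim q1 u hq12.le
    have hfq2ge : Flim u ≤ f q2 := hFlim_le u q2 hq2
    obtain ⟨N1, hN1⟩ := Metric.tendsto_atTop.1 (hft q1) (ε/4) (by linarith)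
    obtain ⟨N2, hN2⟩ := Metric.tendsto_atTop.1 (hft q2) (ε/4) (by linarith)
    refine ⟨max N1 N2, fun n hn => ?_⟩
    have h1 := hN1 n (le_trans (le_max_left _ _) hn)
    have h2 := hN2 n (le_trans (le_max_right _ _) hn)
    rw [Real.dist_eq, abs_lt] at h1 h2 ⊢
    have hm1 : F (φ n) q1 ≤ F (φ n) u := hFmono _ hq12.le
    have hm2 : F (φ n) u ≤ F (φ n) q2 := hFmono _ hq2.le
    constructor
    · linarith [h1.1]
    · linarith [h2.2]
  have hνIio : ∀ u : ℝ, ContinuousAt Flim u → (ν (Iio u)).toReal = Flim u := by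
    intro u hu
    have hll : leftLim Flim u = Flim u :=
      hFlim_mono.continuousWithinAt_Iio_iff_leftLim_eq.1 hu.continuousWithinAt
    have hsing : ν {u} = 0 := by
      rw [hν, sF.measure_singleton, hsFcoe, hll, sub_self, ENNReal.ofReal_zero]
    have hIio : ν (Iio u) = ν (Iic u) := by
      rw [← Iio_union_right (a := u), measure_union (by simp) (measurableSet_singleton u),
        hsing, add_zero]
    rw [hIio, hνIic, ENNReal.toReal_ofReal (hFlim_nonneg u)]
  -- the limit identity on S
  have hkey : ∀ l ∈ S, ∫ s, psi l s ∂ν = h l := by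
    intro l hlS
    have hl : 0 < l := hS' hlS
    have hrepn : ∀ n, hk (φ n) l = ((μ (φ n)) univ).toReal
        + ∫ u in Ioc (0:ℝ) 1, dd l u * F (φ n) u := by
      intro n
      haveI := hμfin (φ n)
      rw [hμrep (φ n) l hl, partsA l hl (μ (φ n)) (hμsupp (φ n))]
    have hrepν : ∫ s, psi l s ∂ν = (ν univ).toReal
        + ∫ u in Ioc (0:ℝ) 1, dd l u * (ν (Iio u)).toReal :=
      partsA l hl ν hνsupp
    have hmasstend : Tendsto (fun n => ((μ (φ n)) univ).toReal) atTop (𝓝 (f 2)) := by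
      have heq : (fun n => ((μ (φ n)) univ).toReal) = fun n => F (φ n) ((2:ℚ):ℝ) := by
        funext n
        simp only [hF]
        rw [hFtotal (φ n) _ (by norm_num)]
      rw [heq]
      exact hft 2
    haveI : IsFiniteMeasure (volume.restrict (Ioc (0:ℝ) 1)) :=
      ⟨by simp [Measure.restrict_apply, lt_top_iff_ne_top]⟩
    have hDCT : Tendsto (fun n => ∫ u in Ioc (0:ℝ) 1, dd l u * F (φ n) u) atTop
        (𝓝 (∫ u in Ioc (0:ℝ) 1, dd l u * (ν (Iio u)).toReal)) := by
      apply tendsto_integral_of_dominated_convergence (fun _ => KK l * C)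
      · intro n
        exact ((dd_measurable l).mul (hFmono (φ n)).measurable).aestronglyMeasurable
      · exact integrable_const _
      · intro n
        filter_upwards [ae_restrict_mem measurableSet_Ioc] with u hu
        rw [Real.norm_eq_abs, abs_mul, abs_of_nonneg (hFrange (φ n) u).1]
        exact mul_le_mul (dd_abs_le hl (Ioc_subset_Icc_self hu)) (hFrange (φ n) u).2
          (hFrange (φ n) u).1 (KK_nonneg l)
      · have hae0 : ∀ᵐ u ∂(volume : Measure ℝ), ContinuousAt Flim u := by
          rw [ae_iff]
          exact (hFlim_mono.countable_not_continuousAt).measure_zero volume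
        filter_upwards [ae_restrict_of_ae hae0] with u hu
        rw [hνIio u hu]
        exact (hpt u hu).const_mul (dd l u)
    have hlim1 : Tendsto (fun n => hk (φ n) l) atTop
        (𝓝 ((ν univ).toReal + ∫ u in Ioc (0:ℝ) 1, dd l u * (ν (Iio u)).toReal)) := by
      have hadd := hmasstend.add hDCT
      rw [show (fun n => hk (φ n) l) = fun n => ((μ (φ n)) univ).toReal
          + ∫ u in Ioc (0:ℝ) 1, dd l u * F (φ n) u from funext hrepn, hνuniv]
      exact hadd
    have hlim2 : Tendsto (fun n => hk (φ n) l) atTop (𝓝 (h l)) :=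
      (hconv l hlS).comp hφmono.tendsto_atTop
    rw [hrepν]
    exact tendsto_nhds_unique hlim1 hlim2
  obtain ⟨g, hg1, hg2⟩ := measure_to_rep ν hνsupp
  exact ⟨g, hg1, fun l hlS => by rw [hg2 l (hS' hlS), hkey l hlS]⟩
end

section
/- Let h be a strictly positive function of class P′ and define 𝐇(t) = sup_{s>0} h(st)/h(s) for t > 0 (which is finite since h(st)/h(s) ≤ max{1,t}). Then for every n, every positive definite Hermitian A ∈ Mₙ(ℂ), every T ∈ Mₙ(ℂ), and all M₀, M₁ > 0: the conditions TᴴT ≤ M₀·I and TᴴAT ≤ M₁·A imply Tᴴh(A)T ≤ M₀·𝐇(M₁/M₀)·h(A). -/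
open Matrix MeasureTheory
open scoped ComplexOrder

lemma aux_selfdot {n : ℕ} (z : Fin n → ℂ) :
    star z ⬝ᵥ z = ((∑ i, Complex.normSq (z i) : ℝ) : ℂ) := by
  simp [dotProduct, Complex.normSq_eq_conj_mul_self]

lemma aux_TMT {n : ℕ} (M T : Matrix (Fin n) (Fin n) ℂ) (w : Fin n → ℂ) :
    star w ⬝ᵥ ((Tᴴ * M * T) *ᵥ w) = star (T *ᵥ w) ⬝ᵥ (M *ᵥ (T *ᵥ w)) := by
  rw [← mulVec_mulVec, ← mulVec_mulVec, dotProduct_mulVec, ← star_mulVec]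

lemma aux_TT {n : ℕ} (T : Matrix (Fin n) (Fin n) ℂ) (w : Fin n → ℂ) :
    star w ⬝ᵥ ((Tᴴ * T) *ᵥ w) = star (T *ᵥ w) ⬝ᵥ (T *ᵥ w) := by
  rw [← mulVec_mulVec, dotProduct_mulVec, ← star_mulVec]

lemma aux_dot_spectral {n : ℕ} (U : Matrix (Fin n) (Fin n) ℂ)
    (g : Fin n → ℝ) (w : Fin n → ℂ) :
    star w ⬝ᵥ ((U * diagonal (fun i => (g i : ℂ)) * star U) *ᵥ w)
      = ((∑ i, g i * Complex.normSq ((star U *ᵥ w) i) : ℝ) : ℂ) := by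
  have key : star w ᵥ* U = star (star U *ᵥ w) := by
    rw [star_mulVec, Matrix.star_eq_conjTranspose, conjTranspose_conjTranspose]
  rw [← mulVec_mulVec, ← mulVec_mulVec, dotProduct_mulVec, key]
  simp only [dotProduct, mulVec_diagonal, Pi.star_apply, Complex.ofReal_sum]
  refine Finset.sum_congr rfl fun i _ => ?_
  rw [Complex.ofReal_mul, Complex.normSq_eq_conj_mul_self, Complex.star_def]
  ring

lemma aux_norm_pres {n : ℕ} (U : Matrix (Fin n) (Fin n) ℂ)
    (hU : U ∈ Matrix.unitaryGroup (Fin n) ℂ) (w : Fin n → ℂ) :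
    ∑ i, Complex.normSq ((star U *ᵥ w) i) = ∑ i, Complex.normSq (w i) := by
  have hUU : U * Uᴴ = 1 := by
    simpa [Matrix.star_eq_conjTranspose] using (Matrix.mem_unitaryGroup_iff).mp hU
  have h1 := aux_selfdot (star U *ᵥ w)
  rw [star_mulVec, dotProduct_mulVec, Matrix.star_eq_conjTranspose,
    conjTranspose_conjTranspose, vecMul_vecMul, hUU, vecMul_one, aux_selfdot] at h1
  have := Complex.ofReal_inj.mp h1
  simpa [Matrix.star_eq_conjTranspose] using this.symm

lemma aux_scalar {lam t : ℝ} (hl : 0 < lam) (ht : 0 < t) (p q : ℂ) :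
    ((1+t)*lam/(1+t*lam)) * Complex.normSq (p+q)
      ≤ (1+t) * (lam * Complex.normSq p + t⁻¹ * Complex.normSq q) := by
  have hden : 0 < 1 + t * lam := by positivity
  have habs : ‖p+q‖ ≤ ‖p‖ + ‖q‖ := norm_add_le p q
  have h1 : Complex.normSq (p+q) ≤ (‖p‖ + ‖q‖)^2 := by
    rw [← Complex.sq_norm]
    exact pow_le_pow_left₀ (norm_nonneg _) habs 2
  set P := ‖p‖
  set Q := ‖q‖
  have hP : 0 ≤ P := norm_nonneg p
  have hQ : 0 ≤ Q := norm_nonneg q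
  have hnp : Complex.normSq p = P^2 := (Complex.sq_norm p).symm
  have hnq : Complex.normSq q = Q^2 := (Complex.sq_norm q).symm
  rw [hnp, hnq]
  have key : lam/(1+t*lam) * (P+Q)^2 ≤ lam * P^2 + t⁻¹ * Q^2 := by
    rw [div_mul_eq_mul_div, div_le_iff₀ hden, inv_eq_one_div]
    have expand : (lam * P ^ 2 + 1 / t * Q ^ 2) * (1 + t * lam) * t
        = lam*P^2*t + Q^2 + t^2*lam^2*P^2 + t*lam*Q^2 := by field_simp; ring
    nlinarith [sq_nonneg (t*lam*P - Q), mul_pos ht hden, sq_nonneg (P+Q)]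
  have h3 : (0:ℝ) ≤ 1 + t := by linarith
  have h4 : 0 ≤ lam/(1+t*lam) := by positivity
  calc ((1+t)*lam/(1+t*lam)) * Complex.normSq (p+q)
      = (1+t) * (lam/(1+t*lam) * Complex.normSq (p+q)) := by ring
    _ ≤ (1+t) * (lam/(1+t*lam) * (P+Q)^2) :=
        mul_le_mul_of_nonneg_left (mul_le_mul_of_nonneg_left h1 h4) h3
    _ ≤ (1+t) * (lam * P^2 + t⁻¹ * Q^2) := mul_le_mul_of_nonneg_left key h3

lemma aux_kernel_nonneg {lam t : ℝ} (hl : 0 < lam) (ht : 0 ≤ t) :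
    0 ≤ (1+t)*lam/(1+t*lam) := by positivity

lemma aux_kernel_le {lam t : ℝ} (hl : 0 < lam) (ht : 0 ≤ t) :
    (1+t)*lam/(1+t*lam) ≤ max 1 lam := by
  have hden : 0 < 1 + t * lam := by positivity
  rw [div_le_iff₀ hden]
  rcases le_total lam 1 with hc | hc
  · rw [max_eq_left hc]; nlinarith
  · rw [max_eq_right hc]
    nlinarith [mul_nonneg (mul_nonneg ht hl.le) (sub_nonneg.2 hc)]

lemma aux_kernel_ratio {s r t : ℝ} (hs : 0 < s) (hr : 0 < r) (ht : 0 ≤ t) :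
    (1+t)*(s*r)/(1+t*(s*r)) ≤ max 1 r * ((1+t)*s/(1+t*s)) := by
  have hd1 : 0 < 1 + t*(s*r) := by positivity
  have hd2 : 0 < 1 + t*s := by positivity
  rw [mul_div_assoc', div_le_div_iff₀ hd1 hd2]
  rcases le_total r 1 with hc | hc
  · rw [max_eq_left hc]
    nlinarith [mul_nonneg (mul_nonneg (mul_nonneg ht ht) (mul_nonneg hs.le hs.le)) (sub_nonneg.2 hc),
      mul_nonneg ht hs.le, mul_nonneg (mul_nonneg ht hs.le) (sub_nonneg.2 hc)]
  · rw [max_eq_right hc]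
    nlinarith [mul_nonneg (mul_nonneg (mul_nonneg (mul_nonneg (mul_nonneg
      (by linarith : (0:ℝ) ≤ 1+t) hs.le) hr.le) ht) hs.le) (sub_nonneg.2 hc)]

lemma aux_integrable {ρ : Measure ℝ} [IsFiniteMeasure ρ] {lam : ℝ} (hl : 0 < lam) :
    IntegrableOn (fun t => ((1+t)*lam)/(1+t*lam)) (Set.Ici 0) ρ := by
  have hmeas : Measurable (fun t : ℝ => ((1+t)*lam)/(1+t*lam)) :=
    ((measurable_const.add measurable_id).mul measurable_const).div
      (measurable_const.add (measurable_id.mul measurable_const))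
  refine Integrable.mono' (integrable_const (max 1 lam)) hmeas.aestronglyMeasurable ?_
  refine (ae_restrict_iff' measurableSet_Ici).2 (Filter.Eventually.of_forall fun t ht => ?_)
  rw [Real.norm_eq_abs, abs_of_nonneg (aux_kernel_nonneg hl ht)]
  exact aux_kernel_le hl ht

/-- Theorem 6.3, Fan: a strictly positive `P'` function `h` is of
type `𝐇` where `𝐇(t) = sup_{s>0} h(st)/h(s)`: the conditions `TᴴT ≤ M₀·I` and
`TᴴAT ≤ M₁·A` imply `Tᴴh(A)T ≤ M₀·𝐇(M₁/M₀)·h(A)`. -/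
theorem pick_function_is_of_type_H
    (h : ℝ → ℝ) (hP : IsPickPos h) (hpos : ∀ l : ℝ, 0 < l → 0 < h l)
    (n : ℕ) (A : Matrix (Fin n) (Fin n) ℂ) (hA : A.PosDef)
    (T : Matrix (Fin n) (Fin n) ℂ)
    (M₀ M₁ : ℝ) (hM₀ : 0 < M₀) (hM₁ : 0 < M₁)
    (hT0 : LoewnerLE (Tᴴ * T) (M₀ • (1 : Matrix (Fin n) (Fin n) ℂ)))
    (hT1 : LoewnerLE (Tᴴ * A * T) (M₁ • A)) :
    LoewnerLE (Tᴴ * matFunCalc h A * T)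
      ((M₀ * sSup {r : ℝ | ∃ s : ℝ, 0 < s ∧ r = h (s * (M₁ / M₀)) / h s}) •
        matFunCalc h A) := by
  classical
  obtain ⟨cst, hcst, ρ, hfin, hrep⟩ := hP
  haveI := hfin
  have hH : A.IsHermitian := hA.1
  set U : Matrix (Fin n) (Fin n) ℂ := (hH.eigenvectorUnitary : Matrix (Fin n) (Fin n) ℂ)
    with hU
  have hUmem : U ∈ Matrix.unitaryGroup (Fin n) ℂ := hH.eigenvectorUnitary.2
  set d : Fin n → ℝ := hH.eigenvalues with hd'
  have hd : ∀ i, 0 < d i := fun i => hA.eigenvalues_pos i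
  set r : ℝ := M₁ / M₀ with hrdef
  have hr : 0 < r := div_pos hM₁ hM₀
  have hUU1 : U * star U = 1 := (Matrix.mem_unitaryGroup_iff).mp hUmem
  have hUU2 : star U * U = 1 := (Matrix.mem_unitaryGroup_iff').mp hUmem
  have hF : matFunCalc h A = U * diagonal (fun i => (h (d i) : ℂ)) * star U := by
    rw [matFunCalc, dif_pos hH]
  have hAspec : A = U * diagonal (fun i => ((d i : ℝ) : ℂ)) * star U := by
    have hs := hH.spectral_theorem
    rw [Unitary.conjStarAlgAut_apply] at hs
    exact hs
  have hFq : ∀ z, star z ⬝ᵥ (matFunCalc h A *ᵥ z)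
      = ((∑ i, h (d i) * Complex.normSq ((star U *ᵥ z) i) : ℝ) : ℂ) := by
    intro z; rw [hF]; exact aux_dot_spectral U (fun i => h (d i)) z
  have hAq : ∀ z, star z ⬝ᵥ (A *ᵥ z)
      = ((∑ i, d i * Complex.normSq ((star U *ᵥ z) i) : ℝ) : ℂ) := by
    intro z; conv_lhs => rw [hAspec]
    exact aux_dot_spectral U d z
  have hT0' : ((M₀ • (1 : Matrix (Fin n) (Fin n) ℂ)) - Tᴴ * T).PosSemidef := hT0
  have hT1' : ((M₁ • A) - Tᴴ * A * T).PosSemidef := hT1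
  have H0 : ∀ w, ∑ i, Complex.normSq ((T *ᵥ w) i) ≤ M₀ * ∑ i, Complex.normSq (w i) := by
    intro w
    have h0 := hT0'.dotProduct_mulVec_nonneg w
    rw [sub_mulVec, dotProduct_sub, smul_mulVec, one_mulVec, dotProduct_smul,
      aux_TT, aux_selfdot, aux_selfdot, Complex.real_smul, ← Complex.ofReal_mul,
      ← Complex.ofReal_sub, Complex.zero_le_real, sub_nonneg] at h0
    exact h0
  have H1 : ∀ w, ∑ i, d i * Complex.normSq ((star U *ᵥ (T *ᵥ w)) i)
      ≤ M₁ * ∑ i, d i * Complex.normSq ((star U *ᵥ w) i) := by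
    intro w
    have h1 := hT1'.dotProduct_mulVec_nonneg w
    rw [sub_mulVec, dotProduct_sub, smul_mulVec, dotProduct_smul,
      aux_TMT, hAq, hAq, Complex.real_smul, ← Complex.ofReal_mul,
      ← Complex.ofReal_sub, Complex.zero_le_real, sub_nonneg] at h1
    exact h1
  -- the sup
  have hHub : ∀ s, 0 < s → h (s * r) ≤ max 1 r * h s := by
    intro s hs
    rw [hrep (s*r) (mul_pos hs hr), hrep s hs, mul_add]
    refine add_le_add (le_mul_of_one_le_left hcst (le_max_left 1 r)) ?_
    rw [← integral_const_mul]
    exact setIntegral_mono_on (aux_integrable (mul_pos hs hr))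
      ((aux_integrable hs).const_mul _) measurableSet_Ici
      (fun t ht => aux_kernel_ratio hs hr ht)
  have hSbdd : BddAbove {r' : ℝ | ∃ s : ℝ, 0 < s ∧ r' = h (s * r) / h s} := by
    refine ⟨max 1 r, ?_⟩
    rintro _ ⟨s, hs, rfl⟩
    rw [div_le_iff₀ (hpos s hs)]
    exact hHub s hs
  set HS : ℝ := sSup {r' : ℝ | ∃ s : ℝ, 0 < s ∧ r' = h (s * r) / h s} with hHS
  have hHSge : ∀ lam, 0 < lam → h (lam * r) ≤ HS * h lam := by
    intro lam hl
    have hmem : h (lam * r) / h lam ∈ {r' : ℝ | ∃ s : ℝ, 0 < s ∧ r' = h (s * r) / h s} :=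
      ⟨lam, hl, rfl⟩
    have := le_csSup hSbdd hmem
    rw [div_le_iff₀ (hpos lam hl)] at this
    exact this
  -- main quadratic-form estimate
  have key : ∀ x : Fin n → ℂ,
      ∑ i, h (d i) * Complex.normSq ((star U *ᵥ (T *ᵥ x)) i)
        ≤ (M₀ * HS) * ∑ i, h (d i) * Complex.normSq ((star U *ᵥ x) i) := by
    intro x
    set a : Fin n → ℂ := star U *ᵥ x with ha
    set b : Fin n → ℂ := star U *ᵥ (T *ᵥ x) with hb
    have hsa0 : ∀ i, 0 ≤ Complex.normSq (a i) := fun i => Complex.normSq_nonneg _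
    have core : ∀ t ∈ Set.Ici (0:ℝ),
        ∑ i, ((1+t)*(d i)/(1+t*(d i))) * Complex.normSq (b i)
          ≤ M₀ * ∑ i, ((1+t)*((d i)*r)/(1+t*((d i)*r))) * Complex.normSq (a i) := by
      intro t ht
      rcases eq_or_lt_of_le (Set.mem_Ici.mp ht) with rfl | htpos
      · have e1 : ∀ lam : ℝ, (1+(0:ℝ))*lam/(1+0*lam) = lam := by intro lam; norm_num
        calc ∑ i, ((1+(0:ℝ))*(d i)/(1+0*(d i))) * Complex.normSq (b i)
            = ∑ i, d i * Complex.normSq (b i) :=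
              Finset.sum_congr rfl fun i _ => by rw [e1]
          _ ≤ M₁ * ∑ i, d i * Complex.normSq (a i) := H1 x
          _ = M₀ * ∑ i, ((1+(0:ℝ))*((d i)*r)/(1+0*((d i)*r))) * Complex.normSq (a i) := by
              rw [Finset.mul_sum, Finset.mul_sum]
              refine Finset.sum_congr rfl fun i _ => ?_
              rw [e1 ((d i)*r), hrdef]
              field_simp
      · set α : Fin n → ℝ := fun i => 1/(1 + t*((d i)*r)) with hα
        have hden : ∀ i, (0:ℝ) < 1 + t*((d i)*r) := by
          intro i
          have : 0 < t*((d i)*r) := mul_pos htpos (mul_pos (hd i) hr)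
          linarith
        set uu : Fin n → ℂ := U *ᵥ (fun i => ((α i : ℝ) : ℂ) * a i) with huu
        set vv : Fin n → ℂ := U *ᵥ (fun i => ((t*((d i)*r)*α i : ℝ) : ℂ) * a i) with hvv
        have hcu : star U *ᵥ uu = fun i => ((α i : ℝ) : ℂ) * a i := by
          rw [huu, mulVec_mulVec, hUU2, one_mulVec]
        have hcv : star U *ᵥ vv = fun i => ((t*((d i)*r)*α i : ℝ) : ℂ) * a i := by
          rw [hvv, mulVec_mulVec, hUU2, one_mulVec]
        have huv : uu + vv = x := by
          rw [huu, hvv, ← mulVec_add]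
          have e : ((fun i => ((α i : ℝ) : ℂ) * a i)
              + (fun i => ((t*((d i)*r)*α i : ℝ) : ℂ) * a i)) = a := by
            funext i
            simp only [Pi.add_apply]
            rw [← add_mul, ← Complex.ofReal_add]
            have e2 : α i + t*((d i)*r)*α i = 1 := by
              simp only [hα]
              field_simp
              exact div_self (ne_of_gt (by have := hden i; linarith))
            rw [e2, Complex.ofReal_one, one_mul]
          rw [e, ha, mulVec_mulVec, hUU1, one_mulVec]
        have hbsplit : ∀ i, b i = (star U *ᵥ (T *ᵥ uu)) i + (star U *ᵥ (T *ᵥ vv)) i := by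
          intro i
          rw [hb, ← huv, mulVec_add, mulVec_add]
          rfl
        set p : Fin n → ℂ := star U *ᵥ (T *ᵥ uu) with hp
        set q : Fin n → ℂ := star U *ᵥ (T *ᵥ vv) with hq
        have step1 : ∀ i, ((1+t)*(d i)/(1+t*(d i))) * Complex.normSq (b i)
            ≤ (1+t) * (d i * Complex.normSq (p i) + t⁻¹ * Complex.normSq (q i)) := by
          intro i
          rw [hbsplit i]
          exact aux_scalar (hd i) htpos (p i) (q i)
        have step2 : ∑ i, d i * Complex.normSq (p i)
            ≤ M₁ * ∑ i, (d i * (α i)^2) * Complex.normSq (a i) := by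
          have h2 := H1 uu
          rw [hcu] at h2
          calc ∑ i, d i * Complex.normSq (p i)
              ≤ M₁ * ∑ i, d i * Complex.normSq (((α i : ℝ) : ℂ) * a i) := h2
            _ = M₁ * ∑ i, (d i * (α i)^2) * Complex.normSq (a i) := by
                congr 1
                refine Finset.sum_congr rfl fun i _ => ?_
                rw [Complex.normSq_mul, Complex.normSq_ofReal]
                ring
        have step3 : ∑ i, Complex.normSq (q i)
            ≤ M₀ * ∑ i, (t*((d i)*r)*α i)^2 * Complex.normSq (a i) := by
          calc ∑ i, Complex.normSq (q i)
              = ∑ i, Complex.normSq ((T *ᵥ vv) i) := aux_norm_pres U hUmem _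
            _ ≤ M₀ * ∑ i, Complex.normSq (vv i) := H0 vv
            _ = M₀ * ∑ i, (t*((d i)*r)*α i)^2 * Complex.normSq (a i) := by
                congr 1
                rw [← aux_norm_pres U hUmem vv, hcv]
                refine Finset.sum_congr rfl fun i _ => ?_
                rw [Complex.normSq_mul, Complex.normSq_ofReal]
                ring
        have percoord : ∀ i, (1+t) * (M₁ * ((d i * (α i)^2) * Complex.normSq (a i)))
            + ((1+t)*t⁻¹) * (M₀ * ((t*((d i)*r)*α i)^2 * Complex.normSq (a i)))
            = M₀ * (((1+t)*((d i)*r)/(1+t*((d i)*r))) * Complex.normSq (a i)) := by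
          intro i
          have hdi := hden i
          have hM1r : M₁ = M₀ * r := by rw [hrdef]; field_simp
          simp only [hα, hM1r]
          field_simp
        calc ∑ i, ((1+t)*(d i)/(1+t*(d i))) * Complex.normSq (b i)
            ≤ ∑ i, (1+t) * (d i * Complex.normSq (p i) + t⁻¹ * Complex.normSq (q i)) :=
              Finset.sum_le_sum fun i _ => step1 i
          _ = (1+t) * (∑ i, d i * Complex.normSq (p i))
              + ((1+t)*t⁻¹) * (∑ i, Complex.normSq (q i)) := by
              rw [Finset.mul_sum, Finset.mul_sum, ← Finset.sum_add_distrib]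
              exact Finset.sum_congr rfl fun i _ => by ring
          _ ≤ (1+t) * (M₁ * ∑ i, (d i * (α i)^2) * Complex.normSq (a i))
              + ((1+t)*t⁻¹) * (M₀ * ∑ i, (t*((d i)*r)*α i)^2 * Complex.normSq (a i)) := by
              have c1 : (0:ℝ) ≤ 1+t := by linarith
              have c2 : (0:ℝ) ≤ (1+t)*t⁻¹ := by positivity
              exact add_le_add (mul_le_mul_of_nonneg_left step2 c1)
                (mul_le_mul_of_nonneg_left step3 c2)
          _ = M₀ * ∑ i, ((1+t)*((d i)*r)/(1+t*((d i)*r))) * Complex.normSq (a i) := by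
              rw [Finset.mul_sum, Finset.mul_sum, Finset.mul_sum, Finset.mul_sum,
                ← Finset.sum_add_distrib]
              rw [Finset.sum_congr rfl fun i _ => percoord i, ← Finset.mul_sum]
    -- integrability
    have int_b : ∀ i : Fin n, IntegrableOn
        (fun t => ((1+t)*(d i)/(1+t*(d i))) * Complex.normSq (b i)) (Set.Ici 0) ρ :=
      fun i => (aux_integrable (hd i)).mul_const _
    have int_a : ∀ i : Fin n, IntegrableOn
        (fun t => ((1+t)*((d i)*r)/(1+t*((d i)*r))) * Complex.normSq (a i)) (Set.Ici 0) ρ :=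
      fun i => (aux_integrable (mul_pos (hd i) hr)).mul_const _
    have expand_b : ∑ i, h (d i) * Complex.normSq (b i)
        = cst * (∑ i, Complex.normSq (b i))
          + ∫ t in Set.Ici (0:ℝ),
              (∑ i, ((1+t)*(d i)/(1+t*(d i))) * Complex.normSq (b i)) ∂ρ := by
      have e : ∀ i, h (d i) * Complex.normSq (b i)
          = cst * Complex.normSq (b i)
            + ∫ t in Set.Ici (0:ℝ), ((1+t)*(d i)/(1+t*(d i))) * Complex.normSq (b i) ∂ρ := by
        intro i
        rw [hrep (d i) (hd i), add_mul, ← integral_mul_const]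
      calc ∑ i, h (d i) * Complex.normSq (b i)
          = ∑ i, (cst * Complex.normSq (b i)
            + ∫ t in Set.Ici (0:ℝ), ((1+t)*(d i)/(1+t*(d i))) * Complex.normSq (b i) ∂ρ) :=
            Finset.sum_congr rfl fun i _ => e i
        _ = _ := by
            rw [Finset.sum_add_distrib, ← Finset.mul_sum,
              ← integral_finset_sum Finset.univ (fun i _ => int_b i)]
    have expand_a : ∑ i, h ((d i) * r) * Complex.normSq (a i)
        = cst * (∑ i, Complex.normSq (a i))
          + ∫ t in Set.Ici (0:ℝ),
              (∑ i, ((1+t)*((d i)*r)/(1+t*((d i)*r))) * Complex.normSq (a i)) ∂ρ := by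
      have e : ∀ i, h ((d i) * r) * Complex.normSq (a i)
          = cst * Complex.normSq (a i)
            + ∫ t in Set.Ici (0:ℝ), ((1+t)*((d i)*r)/(1+t*((d i)*r))) * Complex.normSq (a i) ∂ρ := by
        intro i
        rw [hrep ((d i)*r) (mul_pos (hd i) hr), add_mul, ← integral_mul_const]
      calc ∑ i, h ((d i) * r) * Complex.normSq (a i)
          = ∑ i, (cst * Complex.normSq (a i)
            + ∫ t in Set.Ici (0:ℝ), ((1+t)*((d i)*r)/(1+t*((d i)*r))) * Complex.normSq (a i) ∂ρ) :=
            Finset.sum_congr rfl fun i _ => e i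
        _ = _ := by
            rw [Finset.sum_add_distrib, ← Finset.mul_sum,
              ← integral_finset_sum Finset.univ (fun i _ => int_a i)]
    have hb_le : ∑ i, Complex.normSq (b i) ≤ M₀ * ∑ i, Complex.normSq (a i) := by
      rw [hb, ha, aux_norm_pres U hUmem, aux_norm_pres U hUmem]
      exact H0 x
    calc ∑ i, h (d i) * Complex.normSq (b i)
        = cst * (∑ i, Complex.normSq (b i))
          + ∫ t in Set.Ici (0:ℝ),
              (∑ i, ((1+t)*(d i)/(1+t*(d i))) * Complex.normSq (b i)) ∂ρ := expand_b
      _ ≤ cst * (M₀ * ∑ i, Complex.normSq (a i))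
          + ∫ t in Set.Ici (0:ℝ),
              (M₀ * ∑ i, ((1+t)*((d i)*r)/(1+t*((d i)*r))) * Complex.normSq (a i)) ∂ρ := by
          refine add_le_add (mul_le_mul_of_nonneg_left hb_le hcst) ?_
          exact setIntegral_mono_on
            (integrable_finset_sum _ (fun i _ => int_b i))
            ((integrable_finset_sum _ (fun i _ => int_a i)).const_mul M₀)
            measurableSet_Ici core
      _ = M₀ * (cst * (∑ i, Complex.normSq (a i))
          + ∫ t in Set.Ici (0:ℝ),
              (∑ i, ((1+t)*((d i)*r)/(1+t*((d i)*r))) * Complex.normSq (a i)) ∂ρ) := by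
          rw [integral_const_mul]; ring
      _ = M₀ * ∑ i, h ((d i) * r) * Complex.normSq (a i) := by rw [← expand_a]
      _ ≤ M₀ * ∑ i, (HS * h (d i)) * Complex.normSq (a i) := by
          refine mul_le_mul_of_nonneg_left (Finset.sum_le_sum fun i _ => ?_) hM₀.le
          exact mul_le_mul_of_nonneg_right (hHSge (d i) (hd i)) (hsa0 i)
      _ = (M₀ * HS) * ∑ i, h (d i) * Complex.normSq (a i) := by
          rw [Finset.mul_sum, Finset.mul_sum]
          exact Finset.sum_congr rfl fun i _ => by ring
  -- hermitian facts
  have hDH : (diagonal (fun i => (h (d i) : ℂ))).IsHermitian := by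
    refine isHermitian_diagonal_of_self_adjoint _ ?_
    funext i
    exact Complex.conj_ofReal _
  have hFH : (matFunCalc h A).IsHermitian := by
    rw [hF, Matrix.star_eq_conjTranspose]
    exact isHermitian_mul_mul_conjTranspose U hDH
  have hKF : ((M₀ * HS) • matFunCalc h A).IsHermitian := by
    rw [Matrix.IsHermitian, conjTranspose_smul, star_trivial, hFH.eq]
  refine PosSemidef.of_dotProduct_mulVec_nonneg (hKF.sub (isHermitian_conjTranspose_mul_mul T hFH)) fun x => ?_
  rw [sub_mulVec, dotProduct_sub, smul_mulVec, dotProduct_smul,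
    aux_TMT (matFunCalc h A) T x, hFq, hFq, Complex.real_smul, ← Complex.ofReal_mul,
    ← Complex.ofReal_sub, Complex.zero_le_real, sub_nonneg]
  exact key x
end
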